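/- arXiv:2311.07579 — 11 statements merged into one kernel-verified Lean document; each statement's English description precedes it below -/
import Mathlib

section
/- Let d be a positive integer, let c be a point of R^d, and let x and y be independent random vectors, each uniformly distributed on the closed unit ball of radius 1 centered at c in R^d. Then the probability that the inner product of (y - x) with (x - c) is nonnegative equals 1/2^(d+1). -/
open MeasureTheory
open scoped RealInnerProductSpace

open Metric

lemma aux_set_eq (d : ℕ) (c y : EuclideanSpace ℝ (Fin d)) :
    {x : EuclideanSpace ℝ (Fin d) | 0 ≤ ⟪y - x, x - c⟫} =
      Metric.closedBall (c + (2:ℝ)⁻¹ • (y - c)) (‖y - c‖ / 2) := by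
  ext x
  simp only [Set.mem_setOf_eq, Metric.mem_closedBall, dist_eq_norm]
  have hx : x - (c + (2:ℝ)⁻¹ • (y - c)) = (x - c) - (2:ℝ)⁻¹ • (y - c) := by
    abel
  rw [hx]
  rw [show y - x = (y-c) - (x-c) by abel]
  rw [← pow_le_pow_iff_left₀ (norm_nonneg _) (by positivity) two_ne_zero]
  rw [norm_sub_sq_real, real_inner_smul_right, norm_smul, inner_sub_left,
    real_inner_self_eq_norm_sq]
  have := real_inner_comm (x - c) (y - c)
  have h2 : ‖(2:ℝ)⁻¹‖ = 2⁻¹ := by norm_num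
  rw [h2]
  constructor <;> intro h <;> nlinarith [this]

/-- The uniform probability distribution on the closed unit ball of radius 1
centered at `c` in `ℝ^d`: the restriction of Lebesgue measure to the ball,
normalized to total mass 1. -/
noncomputable def uniformUnitBall (d : ℕ) (c : EuclideanSpace ℝ (Fin d)) :
    Measure (EuclideanSpace ℝ (Fin d)) :=
  (volume (Metric.closedBall c 1))⁻¹ • volume.restrict (Metric.closedBall c 1)

lemma aux_vol_ball (d : ℕ) (c : EuclideanSpace ℝ (Fin d)) :
    volume (Metric.closedBall c 1) = volume (Metric.closedBall (0 : EuclideanSpace ℝ (Fin d)) 1) := by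
  rw [Measure.addHaar_closedBall' volume c zero_le_one]
  simp

lemma aux_V0_ne_zero (d : ℕ) :
    volume (Metric.closedBall (0 : EuclideanSpace ℝ (Fin d)) 1) ≠ 0 :=
  (measure_closedBall_pos _ _ one_pos).ne'

lemma aux_V0_ne_top (d : ℕ) :
    volume (Metric.closedBall (0 : EuclideanSpace ℝ (Fin d)) 1) ≠ ⊤ :=
  measure_closedBall_lt_top.ne

lemma aux_inner (d : ℕ) (c y : EuclideanSpace ℝ (Fin d)) (hy : y ∈ Metric.closedBall c 1) :
    (uniformUnitBall d c) {x | 0 ≤ ⟪y - x, x - c⟫} = ENNReal.ofReal ((‖y - c‖ / 2) ^ d) := by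
  rw [aux_set_eq, uniformUnitBall, Measure.smul_apply,
    Measure.restrict_apply measurableSet_closedBall]
  have hsub : Metric.closedBall (c + (2:ℝ)⁻¹ • (y - c)) (‖y - c‖ / 2) ⊆ Metric.closedBall c 1 := by
    apply closedBall_subset_closedBall'
    have hdc : dist (c + (2:ℝ)⁻¹ • (y - c)) c = ‖y - c‖ / 2 := by
      rw [dist_eq_norm, show c + (2:ℝ)⁻¹ • (y - c) - c = (2:ℝ)⁻¹ • (y - c) by abel,
        norm_smul]
      simp
      ring
    rw [hdc]
    have := mem_closedBall.mp hy
    rw [dist_eq_norm] at this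
    linarith
  rw [Set.inter_eq_self_of_subset_left hsub,
    Measure.addHaar_closedBall' volume (c + (2:ℝ)⁻¹ • (y - c)) (by positivity : (0:ℝ) ≤ ‖y - c‖ / 2), aux_vol_ball, smul_eq_mul,
    finrank_euclideanSpace_fin]
  rw [mul_comm (ENNReal.ofReal _), ← mul_assoc, ENNReal.inv_mul_cancel (aux_V0_ne_zero d)
    (aux_V0_ne_top d), one_mul]

lemma aux_meas_level (d : ℕ) (hd : 0 < d) (c : EuclideanSpace ℝ (Fin d)) {t : ℝ} (ht : 0 < t) :
    volume.restrict (Metric.closedBall c 1) {a | t < ‖a - c‖ ^ d}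
      = (1 - ENNReal.ofReal t) * volume (Metric.closedBall (0 : EuclideanSpace ℝ (Fin d)) 1) := by
  set s : ℝ := t ^ ((d : ℝ)⁻¹) with hs
  have hs0 : 0 ≤ s := Real.rpow_nonneg ht.le _
  have hst : s ^ d = t := Real.rpow_inv_natCast_pow ht.le hd.ne'
  have hset : {a : EuclideanSpace ℝ (Fin d) | t < ‖a - c‖ ^ d} = (Metric.closedBall c s)ᶜ := by
    ext a
    simp only [Set.mem_setOf_eq, Set.mem_compl_iff, Metric.mem_closedBall, dist_eq_norm, not_le]
    constructor
    · intro h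
      have := Real.rpow_lt_rpow ht.le h (by positivity : (0:ℝ) < (d:ℝ)⁻¹)
      rwa [Real.pow_rpow_inv_natCast (norm_nonneg _) hd.ne'] at this
    · intro h
      calc t = s ^ d := hst.symm
        _ < ‖a - c‖ ^ d := pow_lt_pow_left₀ h hs0 hd.ne'
  rw [hset, Measure.restrict_apply measurableSet_closedBall.compl]
  have h1 : (Metric.closedBall c s)ᶜ ∩ Metric.closedBall c 1
      = Metric.closedBall c 1 \ Metric.closedBall c (min 1 s) := by
    ext a
    constructor
    · rintro ⟨h1, h2⟩
      exact ⟨h2, fun hh => h1 (Metric.closedBall_subset_closedBall (min_le_right 1 s) hh)⟩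
    · rintro ⟨h1, h2⟩
      refine ⟨fun hh => h2 ?_, h1⟩
      simp only [Metric.mem_closedBall, le_min_iff] at *
      exact ⟨h1, hh⟩
  rw [h1, measure_diff (Metric.closedBall_subset_closedBall (min_le_left _ _))
    measurableSet_closedBall.nullMeasurableSet measure_closedBall_lt_top.ne,
    Measure.addHaar_closedBall' volume c (le_min zero_le_one hs0), aux_vol_ball,
    finrank_euclideanSpace_fin,
    ENNReal.sub_mul (fun _ _ => aux_V0_ne_top d), one_mul]
  rcases le_total s 1 with h | h
  · rw [min_eq_right h, hst]
  · rw [min_eq_left h, one_pow, ENNReal.ofReal_one, one_mul, tsub_self]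
    have h' : (1:ℝ) ≤ t := by
      rw [← hst]
      calc (1:ℝ) = 1 ^ d := (one_pow d).symm
        _ ≤ s ^ d := pow_le_pow_left₀ zero_le_one h d
    symm
    exact tsub_eq_zero_of_le (le_mul_of_one_le_left zero_le (ENNReal.one_le_ofReal.mpr h'))

lemma aux_J : ∫⁻ t in Set.Ioi (0:ℝ), (1 - ENNReal.ofReal t) = ENNReal.ofReal (1/2) := by
  rw [← Set.Ioc_union_Ioi_eq_Ioi (zero_le_one : (0:ℝ) ≤ 1),
    lintegral_union measurableSet_Ioi (Set.Ioc_disjoint_Ioi le_rfl)]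
  have h2 : ∫⁻ t in Set.Ioi (1:ℝ), (1 - ENNReal.ofReal t) = 0 := by
    rw [setLIntegral_congr_fun_ae measurableSet_Ioi
      (ae_of_all _ fun t (ht : 1 < t) =>
        tsub_eq_zero_of_le (ENNReal.one_le_ofReal.mpr ht.le)), lintegral_zero]
  rw [h2, add_zero]
  have h3 : ∀ t ∈ Set.Ioc (0:ℝ) 1, (1 - ENNReal.ofReal t) = ENNReal.ofReal (1 - t) := by
    intro t ht
    rw [ENNReal.ofReal_sub _ ht.1.le, ENNReal.ofReal_one]
  rw [setLIntegral_congr_fun_ae measurableSet_Ioc (ae_of_all _ h3)]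
  rw [← ofReal_integral_eq_lintegral_ofReal]
  · congr 1
    rw [← intervalIntegral.integral_of_le zero_le_one]
    simp [intervalIntegral.integral_sub intervalIntegrable_const (intervalIntegral.intervalIntegrable_id)]
    norm_num
  · exact (continuous_const.sub continuous_id).integrableOn_Ioc
  · filter_upwards [ae_restrict_mem measurableSet_Ioc] with t ht
    simp only [Pi.zero_apply]
    linarith [ht.1, ht.2]

lemma aux_I (d : ℕ) (hd : 0 < d) (c : EuclideanSpace ℝ (Fin d)) :
    ∫⁻ y in Metric.closedBall c 1, ENNReal.ofReal (‖y - c‖ ^ d)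
      = ENNReal.ofReal (1/2) * volume (Metric.closedBall (0 : EuclideanSpace ℝ (Fin d)) 1) := by
  have hcont : Continuous fun y : EuclideanSpace ℝ (Fin d) => ‖y - c‖ ^ d :=
    ((continuous_id.sub continuous_const).norm.pow d)
  rw [lintegral_eq_lintegral_meas_lt _ (ae_of_all _ fun y => by positivity)
    hcont.aemeasurable]
  rw [setLIntegral_congr_fun_ae measurableSet_Ioi
    (ae_of_all _ fun t (ht : 0 < t) => aux_meas_level d hd c ht)]
  rw [lintegral_mul_const _ (by fun_prop), aux_J]

theorem separability_theta_zero (d : ℕ) (hd : 0 < d) (c : EuclideanSpace ℝ (Fin d)) :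
    ((uniformUnitBall d c).prod (uniformUnitBall d c))
      {p : EuclideanSpace ℝ (Fin d) × EuclideanSpace ℝ (Fin d) |
        0 ≤ ⟪p.2 - p.1, p.1 - c⟫} = 1 / 2 ^ (d + 1) := by
  have hsf : SFinite (uniformUnitBall d c) := by rw [uniformUnitBall]; infer_instance
  have hmeasset : MeasurableSet {p : EuclideanSpace ℝ (Fin d) × EuclideanSpace ℝ (Fin d) |
      0 ≤ ⟪p.2 - p.1, p.1 - c⟫} := by
    have : IsClosed {p : EuclideanSpace ℝ (Fin d) × EuclideanSpace ℝ (Fin d) |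
        0 ≤ ⟪p.2 - p.1, p.1 - c⟫} :=
      isClosed_le continuous_const (Continuous.inner (by fun_prop) (by fun_prop))
    exact this.measurableSet
  rw [Measure.prod_apply_symm hmeasset]
  have hg : ∀ y, uniformUnitBall d c ((fun x => (x, y)) ⁻¹'
      {p : EuclideanSpace ℝ (Fin d) × EuclideanSpace ℝ (Fin d) | 0 ≤ ⟪p.2 - p.1, p.1 - c⟫})
      = uniformUnitBall d c {x | 0 ≤ ⟪y - x, x - c⟫} := fun y => rfl
  simp_rw [hg]
  have hVtop : volume (Metric.closedBall c 1) ≠ ⊤ := measure_closedBall_lt_top.ne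
  have hcongr : ∫⁻ y, uniformUnitBall d c {x | 0 ≤ ⟪y - x, x - c⟫} ∂(uniformUnitBall d c)
      = ∫⁻ y, ENNReal.ofReal ((‖y - c‖ / 2) ^ d) ∂(uniformUnitBall d c) := by
    apply lintegral_congr_ae
    have hae : ∀ᵐ y ∂(uniformUnitBall d c), y ∈ Metric.closedBall c 1 := by
      rw [show (uniformUnitBall d c : Measure (EuclideanSpace ℝ (Fin d)))
        = (volume (Metric.closedBall c 1))⁻¹ • volume.restrict (Metric.closedBall c 1) from rfl,
        MeasureTheory.Measure.ae_ennreal_smul_measure_iff (ENNReal.inv_ne_zero.mpr hVtop)]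
      exact ae_restrict_mem measurableSet_closedBall
    filter_upwards [hae] with y hy
    exact aux_inner d c y hy
  rw [hcongr]
  rw [show (uniformUnitBall d c : Measure (EuclideanSpace ℝ (Fin d)))
      = (volume (Metric.closedBall c 1))⁻¹ • volume.restrict (Metric.closedBall c 1) from rfl,
    lintegral_smul_measure]
  have hsplit : ∀ y : EuclideanSpace ℝ (Fin d), ENNReal.ofReal ((‖y - c‖ / 2) ^ d)
      = ENNReal.ofReal (‖y - c‖ ^ d) * ENNReal.ofReal ((1/2 : ℝ) ^ d) := fun y => by
    rw [← ENNReal.ofReal_mul (by positivity)]; congr 1; ring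
  simp_rw [hsplit]
  rw [lintegral_mul_const _ (by fun_prop), aux_I d hd c, aux_vol_ball]
  have h2 : ENNReal.ofReal (1/2 : ℝ) = 2⁻¹ := by
    rw [show (1/2 : ℝ) = 2⁻¹ by norm_num, ENNReal.ofReal_inv_of_pos two_pos,
      ENNReal.ofReal_ofNat]
  have h2d : ENNReal.ofReal ((1/2 : ℝ) ^ d) = 2⁻¹ ^ d := by
    rw [ENNReal.ofReal_pow (by norm_num), h2]
  rw [h2, h2d]
  calc (volume (Metric.closedBall (0 : EuclideanSpace ℝ (Fin d)) 1))⁻¹ *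
        (2⁻¹ * volume (Metric.closedBall (0 : EuclideanSpace ℝ (Fin d)) 1) * 2⁻¹ ^ d)
      = ((volume (Metric.closedBall (0 : EuclideanSpace ℝ (Fin d)) 1))⁻¹ *
          volume (Metric.closedBall (0 : EuclideanSpace ℝ (Fin d)) 1)) * (2⁻¹ ^ d * 2⁻¹) := by
        ring
    _ = 2⁻¹ ^ (d + 1) := by
        rw [ENNReal.inv_mul_cancel (aux_V0_ne_zero d) (aux_V0_ne_top d), one_mul, pow_succ]
    _ = 1 / 2 ^ (d + 1) := by rw [one_div, ← ENNReal.inv_pow]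
end

section
/- Let d be a positive integer, let theta be a real number with theta >= 1/4, let c be a point of R^d, and let x and y be independent random vectors, each uniformly distributed on the closed unit ball of radius 1 centered at c in R^d. Then the probability that the inner product of (y - x) with (x - c) is at least theta equals 0. -/
open MeasureTheory
open scoped RealInnerProductSpace

theorem separability_theta_ge_quarter (d : ℕ) (hd : 0 < d) (θ : ℝ) (hθ : 1 / 4 ≤ θ)
    (c : EuclideanSpace ℝ (Fin d)) :
    ((uniformUnitBall d c).prod (uniformUnitBall d c))
      {p : EuclideanSpace ℝ (Fin d) × EuclideanSpace ℝ (Fin d) |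
        θ ≤ ⟪p.2 - p.1, p.1 - c⟫} = 0 := by
  have hne : Nonempty (Fin d) := ⟨⟨0, hd⟩⟩
  set μ := uniformUnitBall d c with hμ
  set B := Metric.closedBall c 1 with hB
  set S := Metric.sphere c (1/2 : ℝ) with hS
  -- the uniform measure gives zero mass outside B and to the sphere S
  have hμBc : μ Bᶜ = 0 := by
    rw [hμ, uniformUnitBall, Measure.smul_apply,
      Measure.restrict_apply (measurableSet_closedBall.compl)]
    simp
  have hμS : μ S = 0 := by
    rw [hμ, uniformUnitBall, Measure.smul_apply,
      Measure.restrict_apply (Metric.isClosed_sphere.measurableSet)]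
    have h0 : volume (S ∩ B) = 0 :=
      measure_mono_null Set.inter_subset_left (Measure.addHaar_sphere volume c (1/2))
    simp only [ENNReal.inv_mul_cancel, smul_eq_mul]
    exact mul_eq_zero.mpr (Or.inr (by simpa [hS, hB, one_div] using h0))
  -- inclusion
  have hsub : {p : EuclideanSpace ℝ (Fin d) × EuclideanSpace ℝ (Fin d) |
        θ ≤ ⟪p.2 - p.1, p.1 - c⟫} ⊆
      (S ×ˢ Set.univ) ∪ (Bᶜ ×ˢ Set.univ) ∪ (Set.univ ×ˢ Bᶜ) := by
    rintro ⟨x, y⟩ hp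
    simp only [Set.mem_setOf_eq] at hp
    by_cases hx : x ∈ B
    · by_cases hy : y ∈ B
      · left; left
        refine ⟨?_, Set.mem_univ _⟩
        have hxn : ‖x - c‖ ≤ 1 := by
          simpa [dist_eq_norm] using (Metric.mem_closedBall.mp hx)
        have hyn : ‖y - c‖ ≤ 1 := by
          simpa [dist_eq_norm] using (Metric.mem_closedBall.mp hy)
        have hdec : ⟪y - x, x - c⟫ = ⟪y - c, x - c⟫ - ‖x - c‖ ^ 2 := by
          have : y - x = (y - c) - (x - c) := by abel
          rw [this, inner_sub_left, real_inner_self_eq_norm_sq]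
        have hcs : ⟪y - c, x - c⟫ ≤ ‖y - c‖ * ‖x - c‖ := real_inner_le_norm _ _
        set t := ‖x - c‖ with ht
        have htnn : 0 ≤ t := norm_nonneg _
        have hq : (1:ℝ)/4 ≤ t - t ^ 2 := by
          have h1 : ⟪y - c, x - c⟫ ≤ t :=
            hcs.trans (by nlinarith [norm_nonneg (y - c)])
          nlinarith [hp, hdec]
        have : t = 1/2 := by nlinarith
        show x ∈ S
        simp [hS, Metric.mem_sphere, dist_eq_norm, ← ht, this]
      · right; exact ⟨Set.mem_univ _, hy⟩
    · left; right; exact ⟨hx, Set.mem_univ _⟩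
  have hsf : SFinite μ := by rw [hμ, uniformUnitBall]; infer_instance
  refine measure_mono_null hsub ?_
  refine measure_union_null (measure_union_null ?_ ?_) ?_ <;>
    rw [Measure.prod_prod] <;> simp [hμS, hμBc]
end

section
/- Let d be a positive integer, let theta be a real number with 0 < theta < 1/4, let c be a point of R^d, and let x and y be independent random vectors, each uniformly distributed on the closed unit ball of radius 1 centered at c in R^d. Then the probability that the inner product of (y - x) with (x - c) is at least theta equals the integral over t from 2*sqrt(theta) to 1 of d * t^(d-1) * (t^2/4 - theta)^(d/2) dt. -/
open MeasureTheory
open scoped RealInnerProductSpace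

lemma slice_iff {d : ℕ} (θ : ℝ) (c y x : EuclideanSpace ℝ (Fin d)) :
    θ ≤ ⟪y - x, x - c⟫ ↔
      ‖x - (c + (2:ℝ)⁻¹ • (y - c))‖ ^ 2 ≤ ‖y - c‖ ^ 2 / 4 - θ := by
  have h1 : ⟪y - x, x - c⟫ = ⟪y - c, x - c⟫ - ‖x - c‖ ^ 2 := by
    have hyx : y - x = (y - c) - (x - c) := by abel
    rw [hyx, inner_sub_left, real_inner_self_eq_norm_sq]
  have h2 : ‖x - (c + (2:ℝ)⁻¹ • (y - c))‖ ^ 2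
      = ‖x - c‖ ^ 2 - ⟪x - c, y - c⟫ + ‖y - c‖ ^ 2 / 4 := by
    have hx : x - (c + (2:ℝ)⁻¹ • (y - c)) = (x - c) - (2:ℝ)⁻¹ • (y - c) :=
      sub_add_eq_sub_sub _ _ _
    rw [hx, norm_sub_sq_real, real_inner_smul_right, norm_smul, Real.norm_eq_abs,
      abs_of_pos (by norm_num : (0:ℝ) < (2:ℝ)⁻¹), mul_pow]
    ring
  rw [h1, h2, real_inner_comm]
  constructor <;> intro h <;> linarith

theorem separability_theta_pos (d : ℕ) (hd : 0 < d) (θ : ℝ) (hθ₀ : 0 < θ) (hθ₁ : θ < 1 / 4)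
    (c : EuclideanSpace ℝ (Fin d)) :
    (((uniformUnitBall d c).prod (uniformUnitBall d c))
      {p : EuclideanSpace ℝ (Fin d) × EuclideanSpace ℝ (Fin d) |
        θ ≤ ⟪p.2 - p.1, p.1 - c⟫}).toReal
      = ∫ t in (2 * Real.sqrt θ)..1,
          (d : ℝ) * t ^ (d - 1) * (t ^ 2 / 4 - θ) ^ ((d : ℝ) / 2) := by
  classical
  haveI : Nontrivial (EuclideanSpace ℝ (Fin d)) :=
    Module.nontrivial_of_finrank_pos (R := ℝ) (by rw [finrank_euclideanSpace_fin]; exact hd)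
  set B : Set (EuclideanSpace ℝ (Fin d)) := Metric.closedBall c 1 with hBdef
  set ν : Measure (EuclideanSpace ℝ (Fin d)) := uniformUnitBall d c with hν
  have hB : volume B = volume (Metric.ball (0 : EuclideanSpace ℝ (Fin d)) 1) := by
    rw [hBdef, Measure.addHaar_closedBall _ _ zero_le_one]
    simp
  have hB0 : volume B ≠ 0 := by
    rw [hB]; exact (Metric.measure_ball_pos _ _ one_pos).ne'
  have hBtop : volume B ≠ ⊤ := by
    rw [hB]; exact measure_ball_lt_top.ne
  haveI : IsProbabilityMeasure ν := by
    constructor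
    rw [hν, uniformUnitBall, Measure.smul_apply, Measure.restrict_apply_univ, smul_eq_mul,
      ENNReal.inv_mul_cancel hB0 hBtop]
  have hS : MeasurableSet {p : EuclideanSpace ℝ (Fin d) × EuclideanSpace ℝ (Fin d) |
      θ ≤ ⟪p.2 - p.1, p.1 - c⟫} := by
    refine (isClosed_le continuous_const ?_).measurableSet
    exact Continuous.inner (continuous_snd.sub continuous_fst)
      (continuous_fst.sub continuous_const)
  have step1 : (ν.prod ν) {p : EuclideanSpace ℝ (Fin d) × EuclideanSpace ℝ (Fin d) |
      θ ≤ ⟪p.2 - p.1, p.1 - c⟫} = ∫⁻ y, ν {x | θ ≤ ⟪y - x, x - c⟫} ∂ν := by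
    rw [Measure.prod_apply_symm hS]
    simp only [Set.preimage_setOf_eq]
  have hmem : ∀ᵐ y ∂ν, y ∈ B := by
    rw [hν, uniformUnitBall]
    exact Measure.ae_smul_measure (ae_restrict_mem measurableSet_closedBall) _
  have slice_val : ∀ y ∈ B, ν {x | θ ≤ ⟪y - x, x - c⟫}
      = ENNReal.ofReal ((Real.sqrt (‖y - c‖ ^ 2 / 4 - θ)) ^ d) := by
    intro y hy
    set R : ℝ := ‖y - c‖ ^ 2 / 4 - θ with hR
    set m : EuclideanSpace ℝ (Fin d) := c + (2:ℝ)⁻¹ • (y - c) with hm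
    have hset : {x : EuclideanSpace ℝ (Fin d) | θ ≤ ⟪y - x, x - c⟫}
        = {x | ‖x - m‖ ^ 2 ≤ R} := by
      ext x; exact slice_iff θ c y x
    rcases le_or_gt 0 R with hR0 | hR0
    · have hball : {x : EuclideanSpace ℝ (Fin d) | ‖x - m‖ ^ 2 ≤ R}
          = Metric.closedBall m (Real.sqrt R) := by
        ext x
        rw [Metric.mem_closedBall, dist_eq_norm, Set.mem_setOf_eq,
          Real.le_sqrt (norm_nonneg _) hR0]
      have hy1 : ‖y - c‖ ≤ 1 := by
        rw [hBdef, Metric.mem_closedBall, dist_eq_norm] at hy; exact hy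
      have hsub : Metric.closedBall m (Real.sqrt R) ⊆ B := by
        apply Metric.closedBall_subset_closedBall'
        have h1 : dist m c = ‖y - c‖ / 2 := by
          rw [hm, dist_eq_norm, add_sub_cancel_left, norm_smul, Real.norm_eq_abs,
            abs_of_pos (by norm_num : (0:ℝ) < (2:ℝ)⁻¹)]
          ring
        have h2 : Real.sqrt R ≤ ‖y - c‖ / 2 := by
          calc Real.sqrt R ≤ Real.sqrt (‖y - c‖ ^ 2 / 4) :=
                Real.sqrt_le_sqrt (by rw [hR]; linarith)
            _ = ‖y - c‖ / 2 := by
                rw [show ‖y - c‖ ^ 2 / 4 = (‖y - c‖ / 2) ^ 2 by ring,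
                  Real.sqrt_sq (by positivity)]
        rw [h1]
        linarith
      rw [hset, hball, hν, uniformUnitBall, Measure.smul_apply,
        Measure.restrict_apply measurableSet_closedBall,
        Set.inter_eq_left.mpr hsub,
        Measure.addHaar_closedBall _ _ (Real.sqrt_nonneg R), finrank_euclideanSpace_fin,
        ← hB, smul_eq_mul, mul_comm (ENNReal.ofReal _) (volume B), ← mul_assoc,
        ENNReal.inv_mul_cancel hB0 hBtop, one_mul]
    · have hempty : {x : EuclideanSpace ℝ (Fin d) | ‖x - m‖ ^ 2 ≤ R} = ∅ := by
        ext x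
        simp only [Set.mem_setOf_eq, Set.mem_empty_iff_false, iff_false, not_le]
        exact lt_of_lt_of_le hR0 (by positivity)
      rw [hset, hempty, measure_empty, Real.sqrt_eq_zero'.2 hR0.le, zero_pow hd.ne',
        ENNReal.ofReal_zero]
  set F : ℝ → ℝ := fun t => (Real.sqrt (t ^ 2 / 4 - θ)) ^ d with hF
  have hFc : Continuous F := by
    apply Continuous.pow
    exact Real.continuous_sqrt.comp (((continuous_pow 2).div_const 4).sub continuous_const)
  have step2 : (ν.prod ν) {p : EuclideanSpace ℝ (Fin d) × EuclideanSpace ℝ (Fin d) |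
      θ ≤ ⟪p.2 - p.1, p.1 - c⟫} = ∫⁻ y, ENNReal.ofReal (F ‖y - c‖) ∂ν := by
    rw [step1]
    refine lintegral_congr_ae ?_
    filter_upwards [hmem] with y hy
    exact slice_val y hy
  have step3 : ((ν.prod ν) {p : EuclideanSpace ℝ (Fin d) × EuclideanSpace ℝ (Fin d) |
      θ ≤ ⟪p.2 - p.1, p.1 - c⟫}).toReal = ∫ y, F ‖y - c‖ ∂ν := by
    rw [step2]
    refine (integral_eq_lintegral_of_nonneg_ae
      (Filter.Eventually.of_forall fun y => ?_) ?_).symm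
    · show (0:ℝ) ≤ F ‖y - c‖
      simp only [hF]
      positivity
    · exact (show Continuous fun y : EuclideanSpace ℝ (Fin d) => F ‖y - c‖ by fun_prop
        ).aestronglyMeasurable
  have step4 : ∫ y, F ‖y - c‖ ∂ν
      = (volume B)⁻¹.toReal * ∫ y in B, F ‖y - c‖ ∂(volume) := by
    rw [hν, uniformUnitBall, integral_smul_measure, smul_eq_mul]
  have step5 : ∫ y in B, F ‖y - c‖ ∂(volume)
      = ∫ x in Metric.closedBall (0 : EuclideanSpace ℝ (Fin d)) 1, F ‖x‖ ∂(volume) := by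
    have hmp : MeasurePreserving (fun x : EuclideanSpace ℝ (Fin d) => x + c) volume volume :=
      measurePreserving_add_right volume c
    have hemb : MeasurableEmbedding (fun x : EuclideanSpace ℝ (Fin d) => x + c) :=
      (MeasurableEquiv.addRight c).measurableEmbedding
    rw [← hmp.setIntegral_preimage_emb hemb (fun y => F ‖y - c‖) B]
    have hpre : (fun x : EuclideanSpace ℝ (Fin d) => x + c) ⁻¹' B
        = Metric.closedBall (0 : EuclideanSpace ℝ (Fin d)) 1 := by
      ext x
      simp [hBdef, Metric.mem_closedBall, dist_eq_norm, add_sub_cancel_right]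
    rw [hpre]
    simp only [add_sub_cancel_right]
  set f1 : ℝ → ℝ := fun t => Set.indicator (Set.Iic 1) F t with hf1
  have step6 : ∫ x in Metric.closedBall (0 : EuclideanSpace ℝ (Fin d)) 1, F ‖x‖ ∂(volume)
      = ∫ x : EuclideanSpace ℝ (Fin d), f1 ‖x‖ ∂(volume) := by
    rw [← integral_indicator measurableSet_closedBall]
    refine integral_congr_ae (Filter.Eventually.of_forall fun x => ?_)
    simp only [Set.indicator_apply, hf1, Metric.mem_closedBall, dist_zero_right, Set.mem_Iic]
  have step7 : ∫ x : EuclideanSpace ℝ (Fin d), f1 ‖x‖ ∂(volume)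
      = d • (volume (Metric.ball (0 : EuclideanSpace ℝ (Fin d)) 1)).toReal •
        ∫ t in Set.Ioi (0:ℝ), t ^ (d - 1) • f1 t := by
    have h := integral_fun_norm_addHaar (volume : Measure (EuclideanSpace ℝ (Fin d))) f1
    simpa [finrank_euclideanSpace_fin, Measure.real] using h
  set a : ℝ := 2 * Real.sqrt θ with ha
  have ha0 : 0 < a := by positivity
  have hsq : a ^ 2 = 4 * θ := by
    rw [ha, mul_pow, Real.sq_sqrt hθ₀.le]
    ring
  have ha1 : a < 1 := by
    have h2 : Real.sqrt θ < 1 / 2 := by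
      have h3 := Real.sqrt_lt_sqrt hθ₀.le hθ₁
      rwa [show Real.sqrt (1/4) = 1/2 from by
        rw [show (1:ℝ)/4 = (1/2)^2 by norm_num, Real.sqrt_sq (by norm_num)]] at h3
    rw [ha]; linarith
  have step8 : ∫ t in Set.Ioi (0:ℝ), t ^ (d - 1) • f1 t
      = ∫ t in a..1, t ^ (d - 1) * (t ^ 2 / 4 - θ) ^ ((d : ℝ) / 2) := by
    have hpt : Set.EqOn (fun t => t ^ (d - 1) • f1 t)
        (Set.indicator (Set.Ioc a 1) (fun t => t ^ (d - 1) * (t ^ 2 / 4 - θ) ^ ((d : ℝ) / 2)))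
        (Set.Ioi (0:ℝ)) := by
      intro t ht
      have ht0 : (0:ℝ) < t := ht
      by_cases h1 : t ≤ 1
      · by_cases h2 : a < t
        · rw [Set.indicator_of_mem (Set.mem_Ioc.2 ⟨h2, h1⟩)]
          have hpos : 0 ≤ t ^ 2 / 4 - θ := by nlinarith
          simp only [hf1, Set.indicator_of_mem (Set.mem_Iic.2 h1), smul_eq_mul, hF]
          congr 1
          rw [Real.sqrt_eq_rpow, ← Real.rpow_natCast ((t ^ 2 / 4 - θ) ^ (1/(2:ℝ))) d,
            ← Real.rpow_mul hpos]
          congr 1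
          ring
        · push_neg at h2
          rw [Set.indicator_of_notMem (by
            simp only [Set.mem_Ioc, not_and_or, not_lt, not_le]
            exact Or.inl h2)]
          have hneg : t ^ 2 / 4 - θ ≤ 0 := by nlinarith
          simp only [hf1, Set.indicator_of_mem (Set.mem_Iic.2 h1), smul_eq_mul, hF,
            Real.sqrt_eq_zero'.2 hneg, zero_pow hd.ne', mul_zero]
      · push_neg at h1
        rw [Set.indicator_of_notMem (by
          simp only [Set.mem_Ioc, not_and_or, not_lt, not_le]
          exact Or.inr h1)]
        simp only [hf1, Set.indicator_of_notMem (by simpa using h1 : ¬ t ∈ Set.Iic (1:ℝ)),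
          smul_zero]
    rw [setIntegral_congr_fun measurableSet_Ioi hpt,
      setIntegral_indicator measurableSet_Ioc]
    rw [show Set.Ioi (0:ℝ) ∩ Set.Ioc a 1 = Set.Ioc a 1 from
      Set.inter_eq_right.mpr fun t htt => lt_trans ha0 htt.1]
    rw [intervalIntegral.integral_of_le ha1.le]
  rw [step3, step4, step5, step6, step7, step8, ← hB, nsmul_eq_mul, smul_eq_mul,
    ENNReal.toReal_inv]
  have hk : (0:ℝ) < (volume B).toReal := ENNReal.toReal_pos hB0 hBtop
  rw [show ((volume B).toReal)⁻¹ * ((d:ℝ) * ((volume B).toReal *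
      ∫ t in a..1, t ^ (d - 1) * (t ^ 2 / 4 - θ) ^ ((d : ℝ) / 2)))
      = (d:ℝ) * ∫ t in a..1, t ^ (d - 1) * (t ^ 2 / 4 - θ) ^ ((d : ℝ) / 2) from by
    field_simp]
  rw [← intervalIntegral.integral_const_mul]
  exact intervalIntegral.integral_congr fun t _ => by ring
end

section
/- Let d be a positive integer, let theta be a real number with theta >= 0, let c be a point of R^d, and let x and y be independent random vectors, each uniformly distributed on the closed unit ball of radius 1 centered at c in R^d. Then the probability that the inner product of (y - x) with (x - c) is at least theta equals the integral over t from 0 to 1 of d * t^(d-1) * max(t^2/4 - theta, 0)^(d/2) dt. -/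
open MeasureTheory
open scoped RealInnerProductSpace

theorem separability_theta_nonneg (d : ℕ) (hd : 0 < d) (θ : ℝ) (hθ : 0 ≤ θ)
    (c : EuclideanSpace ℝ (Fin d)) :
    (((uniformUnitBall d c).prod (uniformUnitBall d c))
      {p : EuclideanSpace ℝ (Fin d) × EuclideanSpace ℝ (Fin d) |
        θ ≤ ⟪p.2 - p.1, p.1 - c⟫}).toReal
      = ∫ t in (0:ℝ)..1,
          (d : ℝ) * t ^ (d - 1) * (max (t ^ 2 / 4 - θ) 0) ^ ((d : ℝ) / 2) := by
  classical
  haveI : Nontrivial (EuclideanSpace ℝ (Fin d)) :=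
    Module.nontrivial_of_finrank_pos (R := ℝ) (by rw [finrank_euclideanSpace_fin]; exact hd)
  set g : ℝ → ℝ := fun t => Real.sqrt (max (t ^ 2 / 4 - θ) 0) ^ d with hg
  have hg_nonneg : ∀ t, 0 ≤ g t := fun t => pow_nonneg (Real.sqrt_nonneg _) _
  have hg_cont : Continuous g := by
    apply Continuous.pow
    exact Real.continuous_sqrt.comp (((continuous_pow 2).div_const 4 |>.sub
      continuous_const).max continuous_const)
  have hκ0 : volume (Metric.closedBall c 1) ≠ 0 :=
    (Metric.measure_closedBall_pos volume c one_pos).ne'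
  have hκtop : volume (Metric.closedBall c 1) ≠ ⊤ := measure_closedBall_lt_top.ne
  have hκball : volume (Metric.ball (0 : EuclideanSpace ℝ (Fin d)) 1)
      = volume (Metric.closedBall c 1) := by
    rw [Measure.addHaar_closedBall volume c zero_le_one]; simp
  -- the slice computation
  have hslice : ∀ y ∈ Metric.closedBall c 1,
      uniformUnitBall d c {x | θ ≤ ⟪y - x, x - c⟫}
        = ENNReal.ofReal (g ‖y - c‖) := by
    intro y hy
    set t := ‖y - c‖ with ht
    have ht0 : 0 ≤ t := norm_nonneg _
    have ht1 : t ≤ 1 := by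
      have := Metric.mem_closedBall.mp hy; rwa [dist_eq_norm] at this
    set m := c + (2:ℝ)⁻¹ • (y - c) with hm
    have hmc : ‖m - c‖ = t / 2 := by
      rw [hm, add_sub_cancel_left, norm_smul]
      simp [ht]
      ring
    have key : ∀ x, ⟪y - x, x - c⟫ = t ^ 2 / 4 - ‖x - m‖ ^ 2 := by
      intro x
      simp only [ht, hm, ← real_inner_self_eq_norm_sq, inner_sub_left, inner_sub_right,
        inner_add_left, inner_add_right, real_inner_smul_left, real_inner_smul_right,
        real_inner_comm]
      ring
    by_cases hcase : θ ≤ t ^ 2 / 4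
    · have hr0 : 0 ≤ t ^ 2 / 4 - θ := by linarith
      set r := Real.sqrt (t ^ 2 / 4 - θ) with hrdef
      have hr_le : r ≤ t / 2 := by
        rw [hrdef]
        calc Real.sqrt (t ^ 2 / 4 - θ) ≤ Real.sqrt (t ^ 2 / 4) :=
              Real.sqrt_le_sqrt (by linarith)
          _ = t / 2 := by
              rw [show t ^ 2 / 4 = (t / 2) ^ 2 by ring, Real.sqrt_sq (by linarith)]
      have hset : {x : EuclideanSpace ℝ (Fin d) | θ ≤ ⟪y - x, x - c⟫}
          = Metric.closedBall m r := by
        ext x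
        simp only [Set.mem_setOf_eq, Metric.mem_closedBall, dist_eq_norm, key x]
        constructor
        · intro h
          have h2 : ‖x - m‖ ^ 2 ≤ t ^ 2 / 4 - θ := by linarith
          calc ‖x - m‖ = Real.sqrt (‖x - m‖ ^ 2) := (Real.sqrt_sq (norm_nonneg _)).symm
            _ ≤ r := Real.sqrt_le_sqrt h2
        · intro h
          have h2 : ‖x - m‖ ^ 2 ≤ r ^ 2 := pow_le_pow_left₀ (norm_nonneg _) h 2
          rw [hrdef, Real.sq_sqrt hr0] at h2
          linarith
      have hsub : Metric.closedBall m r ⊆ Metric.closedBall c 1 := by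
        apply Metric.closedBall_subset_closedBall'
        rw [dist_eq_norm, hmc]; linarith
      rw [hset, uniformUnitBall, Measure.smul_apply,
        Measure.restrict_apply measurableSet_closedBall, Set.inter_eq_left.mpr hsub,
        Measure.addHaar_closedBall volume m (Real.sqrt_nonneg _), hκball,
        finrank_euclideanSpace_fin, smul_eq_mul, mul_comm (ENNReal.ofReal _),
        ← mul_assoc, ENNReal.inv_mul_cancel hκ0 hκtop, one_mul]
      simp only [hg, max_eq_left hr0, hrdef]
    · have hset : {x : EuclideanSpace ℝ (Fin d) | θ ≤ ⟪y - x, x - c⟫} = ∅ := by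
        ext x
        simp only [Set.mem_setOf_eq, Set.mem_empty_iff_false, iff_false, not_le, key x]
        nlinarith [sq_nonneg ‖x - m‖]
      rw [hset]
      simp only [hg, max_eq_right (by linarith : t ^ 2 / 4 - θ ≤ 0), Real.sqrt_zero,
        zero_pow hd.ne']
      simp
  -- measurability of the event
  have hS : MeasurableSet {p : EuclideanSpace ℝ (Fin d) × EuclideanSpace ℝ (Fin d) |
      θ ≤ ⟪p.2 - p.1, p.1 - c⟫} := by
    have hcont : Continuous fun p : EuclideanSpace ℝ (Fin d) × EuclideanSpace ℝ (Fin d) =>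
        ⟪p.2 - p.1, p.1 - c⟫ :=
      Continuous.inner (continuous_snd.sub continuous_fst) (continuous_fst.sub continuous_const)
    exact measurableSet_le measurable_const hcont.measurable
  haveI : SFinite (uniformUnitBall d c) := by rw [uniformUnitBall]; infer_instance
  rw [Measure.prod_apply_symm hS]
  have hae : ∀ᵐ y ∂(uniformUnitBall d c),
      (uniformUnitBall d c) ((fun x => (x, y)) ⁻¹'
        {p : EuclideanSpace ℝ (Fin d) × EuclideanSpace ℝ (Fin d) |
          θ ≤ ⟪p.2 - p.1, p.1 - c⟫}) = ENNReal.ofReal (g ‖y - c‖) := by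
    have h1 : ∀ᵐ y ∂(uniformUnitBall d c), y ∈ Metric.closedBall c 1 := by
      rw [uniformUnitBall]
      exact Measure.ae_smul_measure (ae_restrict_mem measurableSet_closedBall) _
    filter_upwards [h1] with y hy
    exact hslice y hy
  rw [lintegral_congr_ae hae]
  have hmeas : AEStronglyMeasurable (fun y : EuclideanSpace ℝ (Fin d) => g ‖y - c‖)
      (uniformUnitBall d c) :=
    (hg_cont.comp ((continuous_id.sub continuous_const).norm)).aestronglyMeasurable
  rw [← integral_eq_lintegral_of_nonneg_ae (ae_of_all _ fun y => hg_nonneg _) hmeas]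
  rw [uniformUnitBall, integral_smul_measure]
  -- translation to the origin
  have hmem : ∀ z : EuclideanSpace ℝ (Fin d),
      z + c ∈ Metric.closedBall c 1 ↔ z ∈ Metric.closedBall (0 : EuclideanSpace ℝ (Fin d)) 1 := by
    intro z
    simp [Metric.mem_closedBall, dist_eq_norm]
  have htrans : ∫ y in Metric.closedBall c 1, g ‖y - c‖
      = ∫ z in Metric.closedBall (0 : EuclideanSpace ℝ (Fin d)) 1, g ‖z‖ := by
    rw [← integral_indicator measurableSet_closedBall,
      ← integral_indicator measurableSet_closedBall,
      ← integral_add_right_eq_self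
        (Set.indicator (Metric.closedBall c 1) fun y => g ‖y - c‖) c]
    congr 1
    funext z
    by_cases hz : z ∈ Metric.closedBall (0 : EuclideanSpace ℝ (Fin d)) 1
    · rw [Set.indicator_of_mem ((hmem z).mpr hz), Set.indicator_of_mem hz,
        add_sub_cancel_right]
    · rw [Set.indicator_of_notMem (fun h => hz ((hmem z).mp h)),
        Set.indicator_of_notMem hz]
  rw [htrans]
  -- radial integration
  have hind : (Set.indicator (Metric.closedBall (0 : EuclideanSpace ℝ (Fin d)) 1)
        fun z => g ‖z‖) = fun z => Set.indicator (Set.Iic 1) g ‖z‖ := by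
    funext z
    simp only [Set.indicator_apply, mem_closedBall_zero_iff, Set.mem_Iic]
  rw [← integral_indicator measurableSet_closedBall, hind,
    MeasureTheory.integral_fun_norm_addHaar volume (Set.indicator (Set.Iic 1) g),
    finrank_euclideanSpace_fin]
  have hinner : ∫ y in Set.Ioi (0:ℝ), y ^ (d - 1) • Set.indicator (Set.Iic 1) g y
      = ∫ y in Set.Ioc (0:ℝ) 1, y ^ (d - 1) * g y := by
    have heq : (fun y : ℝ => y ^ (d - 1) • Set.indicator (Set.Iic 1) g y)
        = Set.indicator (Set.Iic 1) (fun y => y ^ (d - 1) * g y) := by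
      funext y
      by_cases h : y ∈ Set.Iic (1:ℝ) <;>
        simp [Set.indicator_of_mem, Set.indicator_of_notMem, h, smul_eq_mul]
    rw [heq, setIntegral_indicator measurableSet_Iic, Set.Ioi_inter_Iic]
  rw [hinner, measureReal_def, hκball]
  -- convert the interval integral and clean up constants
  rw [intervalIntegral.integral_of_le zero_le_one]
  have hg_eq : ∀ t : ℝ, g t = (max (t ^ 2 / 4 - θ) 0) ^ ((d : ℝ) / 2) := by
    intro t
    have h0 : (0:ℝ) ≤ max (t ^ 2 / 4 - θ) 0 := le_max_right _ _
    show Real.sqrt (max (t ^ 2 / 4 - θ) 0) ^ d = _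
    rw [← Real.rpow_natCast (Real.sqrt _) d, Real.sqrt_eq_rpow, ← Real.rpow_mul h0]
    congr 1
    ring
  have hRHS : ∫ t in Set.Ioc (0:ℝ) 1,
        (d : ℝ) * t ^ (d - 1) * (max (t ^ 2 / 4 - θ) 0) ^ ((d : ℝ) / 2)
      = (d : ℝ) * ∫ y in Set.Ioc (0:ℝ) 1, y ^ (d - 1) * g y := by
    rw [← MeasureTheory.integral_const_mul]
    refine integral_congr_ae (Filter.Eventually.of_forall fun y => ?_)
    simp only [hg_eq]
    ring
  rw [hRHS]
  have hκR : (volume (Metric.closedBall c 1)).toReal ≠ 0 :=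
    ENNReal.toReal_ne_zero.mpr ⟨hκ0, hκtop⟩
  rw [ENNReal.toReal_inv, nsmul_eq_mul, smul_eq_mul, smul_eq_mul]
  field_simp
end

section
/- Let d be a positive integer, let theta >= 0 be a real number, and let y be a point of R^d with norm at most 1. Then the d-dimensional Lebesgue measure of the set of points x in R^d satisfying both norm(x) <= 1 and inner product of (y - x) with x at least theta equals the Lebesgue measure of a ball in R^d of radius max(norm(y)^2/4 - theta, 0)^(1/2). -/
open MeasureTheory
open scoped RealInnerProductSpace

theorem ball_intersection_volume (d : ℕ) (hd : 0 < d) (θ : ℝ) (hθ : 0 ≤ θ)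
    (y : EuclideanSpace ℝ (Fin d)) (hy : ‖y‖ ≤ 1) :
    volume {x : EuclideanSpace ℝ (Fin d) | ‖x‖ ≤ 1 ∧ θ ≤ ⟪y - x, x⟫}
      = volume (Metric.closedBall (0 : EuclideanSpace ℝ (Fin d))
          (Real.sqrt (max (‖y‖ ^ 2 / 4 - θ) 0))) := by
  haveI : Nonempty (Fin d) := ⟨⟨0, hd⟩⟩
  set c : EuclideanSpace ℝ (Fin d) := (1/2 : ℝ) • y with hc
  have key : ∀ x : EuclideanSpace ℝ (Fin d),
      ‖x - c‖ ^ 2 = ‖y‖ ^ 2 / 4 - ⟪y - x, x⟫ := by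
    intro x
    have h1 : ⟪y - x, x⟫ = ⟪y, x⟫ - ⟪x, x⟫ := by rw [inner_sub_left]
    have h2 : ‖x - c‖ ^ 2 = ‖x‖ ^ 2 - 2 * ⟪x, c⟫ + ‖c‖ ^ 2 :=
      norm_sub_sq_real x c
    have h3 : ⟪x, c⟫ = (1/2) * ⟪x, y⟫ := by rw [hc, real_inner_smul_right]
    have h4 : ‖c‖ ^ 2 = ‖y‖ ^ 2 / 4 := by
      rw [hc, norm_smul]
      simp [mul_pow]
      ring
    have h5 : ⟪x, x⟫ = ‖x‖ ^ 2 := real_inner_self_eq_norm_sq x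
    have h6 : ⟪x, y⟫ = ⟪y, x⟫ := real_inner_comm y x
    rw [h2, h3, h4, h1, h5, h6]; ring
  rcases lt_or_ge (‖y‖ ^ 2 / 4 - θ) 0 with h | h
  · have hmax : max (‖y‖ ^ 2 / 4 - θ) 0 = 0 := max_eq_right h.le
    have hempty : {x : EuclideanSpace ℝ (Fin d) | ‖x‖ ≤ 1 ∧ θ ≤ ⟪y - x, x⟫} = ∅ := by
      ext x
      simp only [Set.mem_setOf_eq, Set.mem_empty_iff_false, iff_false, not_and]
      intro _ hθ'
      have := key x
      nlinarith [sq_nonneg ‖x - c‖]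
    rw [hempty, hmax, Real.sqrt_zero, Metric.closedBall_zero]
    simp
  · have hmax : max (‖y‖ ^ 2 / 4 - θ) 0 = ‖y‖ ^ 2 / 4 - θ := max_eq_left h
    set r := Real.sqrt (‖y‖ ^ 2 / 4 - θ) with hr
    have hr2 : r ^ 2 = ‖y‖ ^ 2 / 4 - θ := Real.sq_sqrt h
    have hrle : r ≤ ‖y‖ / 2 := by
      rw [hr]
      have : ‖y‖ ^ 2 / 4 - θ ≤ (‖y‖ / 2) ^ 2 := by nlinarith
      calc Real.sqrt (‖y‖ ^ 2 / 4 - θ) ≤ Real.sqrt ((‖y‖ / 2) ^ 2) :=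
            Real.sqrt_le_sqrt this
        _ = ‖y‖ / 2 := Real.sqrt_sq (by positivity)
    have hset : {x : EuclideanSpace ℝ (Fin d) | ‖x‖ ≤ 1 ∧ θ ≤ ⟪y - x, x⟫}
        = Metric.closedBall c r := by
      ext x
      simp only [Set.mem_setOf_eq, Metric.mem_closedBall, dist_eq_norm]
      constructor
      · rintro ⟨hx1, hx2⟩
        have : ‖x - c‖ ^ 2 ≤ r ^ 2 := by rw [key x, hr2]; linarith
        nlinarith [norm_nonneg (x - c), Real.sqrt_nonneg (‖y‖ ^ 2 / 4 - θ)]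
      · intro hx
        have hsq : ‖x - c‖ ^ 2 ≤ r ^ 2 := by
          have := norm_nonneg (x - c)
          nlinarith
        have hinner : θ ≤ ⟪y - x, x⟫ := by
          have := key x
          rw [hr2] at hsq
          linarith
        refine ⟨?_, hinner⟩
        have hcnorm : ‖c‖ = ‖y‖ / 2 := by
          rw [hc, norm_smul]; simp; ring
        calc ‖x‖ = ‖(x - c) + c‖ := by rw [sub_add_cancel]
          _ ≤ ‖x - c‖ + ‖c‖ := norm_add_le _ _
          _ ≤ r + ‖y‖ / 2 := by rw [hcnorm]; linarith
          _ ≤ ‖y‖ := by linarith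
          _ ≤ 1 := hy
    rw [hset, hmax, Measure.addHaar_closedBall_center]
end

section
/- Let d be a positive integer and let r, h be real numbers with 0 < h <= r. Then the d-dimensional Lebesgue measure of the spherical cap { x in R^d : norm(x) <= r and x_1 >= r - h } (where x_1 is the first coordinate of x) equals V_d(r) * (1/2) * I_{(2rh - h^2)/r^2}((d+1)/2, 1/2), where V_d(r) = pi^(d/2) r^d / Gamma(d/2 + 1) is the volume of the ball of radius r in R^d. -/
open MeasureTheory

/-- The regularized incomplete beta function
`I_x(p, q) = (∫_0^x s^(p-1) (1-s)^(q-1) ds) / (∫_0^1 s^(p-1) (1-s)^(q-1) ds)`. -/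
noncomputable def regIncBeta (x p q : ℝ) : ℝ :=
  (∫ s in (0:ℝ)..x, s ^ (p - 1) * (1 - s) ^ (q - 1)) /
    (∫ s in (0:ℝ)..1, s ^ (p - 1) * (1 - s) ^ (q - 1))
open MeasureTheory Set intervalIntegral

lemma cap_aux_ball (n : ℕ) {ρ : ℝ} (hρ : 0 ≤ ρ) :
    volume (Metric.closedBall (0 : EuclideanSpace ℝ (Fin n)) ρ)
      = ENNReal.ofReal (Real.sqrt Real.pi ^ n * ρ ^ n / Real.Gamma (n / 2 + 1)) := by
  cases n with
  | zero =>
      have h1 : Metric.closedBall (0 : EuclideanSpace ℝ (Fin 0)) ρ = Set.univ := by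
        ext x
        simp [Metric.mem_closedBall, Subsingleton.elim x 0, hρ]
      rw [h1]
      have h2 := (EuclideanSpace.volume_preserving_symm_measurableEquiv_toLp (Fin 0)).measure_preimage
        (MeasurableSet.univ.nullMeasurableSet)
      simp only [Set.preimage_univ] at h2
      rw [h2]
      simp [MeasureTheory.volume_pi, Measure.pi_univ, Real.Gamma_one]
  | succ m =>
      rw [EuclideanSpace.volume_closedBall]
      rw [Fintype.card_fin, ← ENNReal.ofReal_pow hρ, ← ENNReal.ofReal_mul (by positivity)]
      congr 1
      ring


lemma cap_aux_slice (n : ℕ) {c : ℝ} (hc : 0 ≤ c) :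
    volume {y : Fin n → ℝ | ∑ i, y i ^ 2 ≤ c}
      = ENNReal.ofReal (Real.sqrt Real.pi ^ n * Real.sqrt c ^ n / Real.Gamma (n / 2 + 1)) := by
  have hmp := (EuclideanSpace.volume_preserving_symm_measurableEquiv_toLp (Fin n)).symm
  have h1 := hmp.measure_preimage
    (measurableSet_closedBall (x := (0 : EuclideanSpace ℝ (Fin n)))
      (ε := Real.sqrt c)).nullMeasurableSet
  have h2 : (MeasurableEquiv.toLp 2 (Fin n → ℝ)).symm.symm ⁻¹'
      (Metric.closedBall (0 : EuclideanSpace ℝ (Fin n)) (Real.sqrt c))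
      = {y : Fin n → ℝ | ∑ i, y i ^ 2 ≤ c} := by
    ext y
    simp only [Set.mem_preimage, Metric.mem_closedBall, dist_zero_right, Set.mem_setOf_eq]
    rw [EuclideanSpace.norm_eq]
    have hy : ∀ i, ‖(MeasurableEquiv.toLp 2 (Fin n → ℝ)).symm.symm y i‖ ^ 2 = y i ^ 2 := by
      intro i
      rw [Real.norm_eq_abs, sq_abs]
      rfl
    simp_rw [hy]
    exact Real.sqrt_le_sqrt_iff hc
  rw [← h2, h1, cap_aux_ball n (Real.sqrt_nonneg c)]

lemma cap_aux_beta {p q : ℝ} (hp : 0 < p) (hq : 0 < q) :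
    ∫ s in (0:ℝ)..1, s ^ (p - 1) * (1 - s) ^ (q - 1)
      = Real.Gamma p * Real.Gamma q / Real.Gamma (p + q) := by
  have h1 : Complex.betaIntegral p q
      = Complex.ofReal (∫ s in (0:ℝ)..1, s ^ (p - 1) * (1 - s) ^ (q - 1)) := by
    rw [← intervalIntegral.integral_ofReal, Complex.betaIntegral]
    refine intervalIntegral.integral_congr fun s hs => ?_
    rw [Set.uIcc_of_le (by norm_num : (0:ℝ) ≤ 1)] at hs
    rw [Complex.ofReal_mul, Complex.ofReal_cpow hs.1, Complex.ofReal_cpow (by linarith [hs.2]),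
      Complex.ofReal_sub, Complex.ofReal_sub, Complex.ofReal_one]
    norm_cast
  have h2 := Complex.Gamma_mul_Gamma_eq_betaIntegral (s := (p:ℂ)) (t := (q:ℂ))
    (by simpa using hp) (by simpa using hq)
  rw [h1, ← Complex.ofReal_add, Complex.Gamma_ofReal, Complex.Gamma_ofReal,
    Complex.Gamma_ofReal, ← Complex.ofReal_mul, ← Complex.ofReal_mul] at h2
  have h3 := Complex.ofReal_inj.mp h2
  have h4 : Real.Gamma (p + q) ≠ 0 := (Real.Gamma_pos_of_pos (by linarith)).ne'
  field_simp
  rw [h3]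
  ring

lemma cap_aux_intble {e1 e2 : ℝ} (he1 : 0 ≤ e1) (he2 : -1 < e2) :
    IntegrableOn (fun s : ℝ => s ^ e1 * (1 - s) ^ e2) (Set.Icc (0:ℝ) 1) volume := by
  have i1 : IntervalIntegrable (fun s : ℝ => (1 - s) ^ e2) volume 0 1 := by
    have := (intervalIntegral.intervalIntegrable_rpow' (a := 0) (b := 1) he2).comp_sub_left 1
    simpa using this.symm
  have i2 : IntervalIntegrable (fun s : ℝ => s ^ e1 * (1 - s) ^ e2) volume 0 1 :=
    i1.continuousOn_mul (continuousOn_id.rpow_const fun x _ => Or.inr he1)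
  rw [integrableOn_Icc_iff_integrableOn_Ioc]
  exact i2.1


lemma cap_aux_sqrpow {w : ℝ} (hw : 0 ≤ w) (y : ℝ) : (w ^ 2) ^ y = w ^ (2 * y) := by
  rw [← Real.rpow_natCast w 2, ← Real.rpow_mul hw]
  norm_num

lemma cap_aux_subst (n : ℕ) {r h : ℝ} (hh : 0 < h) (hhr : h ≤ r) :
    ∫ s in (0:ℝ)..((2 * r * h - h ^ 2) / r ^ 2), s ^ ((n:ℝ)/2) * (1 - s) ^ (-(1/2) : ℝ)
      = (2 / r ^ (n+1)) * ∫ t in (r-h)..r, Real.sqrt (r ^ 2 - t ^ 2) ^ n := by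
  have hr : 0 < r := hh.trans_le hhr
  set a := r - h with ha_def
  have ha0 : 0 ≤ a := by simp [ha_def]; linarith
  have har : a < r := by simp [ha_def]; linarith
  set g : ℝ → ℝ := fun s => s ^ ((n:ℝ)/2) * (1 - s) ^ (-(1/2) : ℝ) with hg_def
  set f : ℝ → ℝ := fun t => 1 - t ^ 2 / r ^ 2 with hf_def
  set f' : ℝ → ℝ := fun t => -(2 * t) / r ^ 2 with hf'_def
  have hfa : f a = (2 * r * h - h ^ 2) / r ^ 2 := by
    simp only [hf_def, ha_def]; field_simp; ring
  have hfr : f r = 0 := by simp only [hf_def]; field_simp; ring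
  -- key pointwise identity
  have claim : ∀ t ∈ Icc a r, t ≠ 0 →
      g (f t) * f' t = -(2 / r ^ (n+1)) * Real.sqrt (r ^ 2 - t ^ 2) ^ n := by
    intro t htm htne
    have ht0 : 0 < t := lt_of_le_of_ne (ha0.trans htm.1) (Ne.symm htne)
    have htr : t ≤ r := htm.2
    have hrt2 : 0 ≤ r ^ 2 - t ^ 2 := by nlinarith
    have hfe : f t = (Real.sqrt (r ^ 2 - t ^ 2) / r) ^ 2 := by
      simp only [hf_def]
      rw [div_pow, Real.sq_sqrt hrt2]
      field_simp
    have h1f : 1 - f t = (t / r) ^ 2 := by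
      simp only [hf_def]
      field_simp
      ring
    rw [hg_def]
    simp only []
    rw [h1f, hfe, cap_aux_sqrpow (by positivity) ((n:ℝ)/2), cap_aux_sqrpow (by positivity) _,
      show 2 * ((n:ℝ)/2) = (n:ℝ) by ring, Real.rpow_natCast,
      show 2 * (-(1/2) : ℝ) = -1 by ring, Real.rpow_neg_one]
    simp only [hf'_def]
    rw [div_pow]
    field_simp
    ring
  have huIcc : uIcc a r = Icc a r := uIcc_of_le har.le
  have hinf : a ⊓ r = a := inf_of_le_left har.le
  have hsup : a ⊔ r = r := sup_of_le_right har.le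
  -- hypotheses of integral_comp_mul_deriv'''
  have hf_cont : ContinuousOn f (uIcc a r) := by
    apply Continuous.continuousOn; simp only [hf_def]; fun_prop
  have hff' : ∀ t ∈ Ioo (a ⊓ r) (a ⊔ r), HasDerivWithinAt f (f' t) (Ioi t) t := by
    intro t _
    have : HasDerivAt f (f' t) t := by
      simp only [hf_def, hf'_def]
      have := ((hasDerivAt_pow 2 t).div_const (r ^ 2)).const_sub 1
      refine this.congr_deriv ?_
      norm_num
      ring
    exact this.hasDerivWithinAt
  have himage : f '' Ioo (a ⊓ r) (a ⊔ r) ⊆ Ioo 0 1 := by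
    rw [hinf, hsup]
    rintro _ ⟨t, ht, rfl⟩
    have ht0 : 0 < t := lt_of_le_of_lt ha0 ht.1
    have ht2 : t ^ 2 < r ^ 2 := by nlinarith [ht.2]
    constructor
    · simp only [hf_def, sub_pos]
      rw [div_lt_one (by positivity)]
      exact ht2
    · simp only [hf_def]
      have : 0 < t ^ 2 / r ^ 2 := by positivity
      linarith
  have himage' : f '' uIcc a r ⊆ Icc 0 1 := by
    rw [huIcc]
    rintro _ ⟨t, ht, rfl⟩
    have ht2 : t ^ 2 ≤ r ^ 2 := by nlinarith [ht.1, ht.2, ha0.trans ht.1]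
    have : 0 ≤ t ^ 2 / r ^ 2 := by positivity
    constructor
    · simp only [hf_def, sub_nonneg]
      rw [div_le_one (by positivity)]
      exact ht2
    · simp only [hf_def]; linarith
  have hg_cont : ContinuousOn g (f '' Ioo (a ⊓ r) (a ⊔ r)) := by
    refine ContinuousOn.mono ?_ himage
    refine ContinuousOn.mul ?_ ?_
    · exact continuousOn_id.rpow_const fun s hs => Or.inl hs.1.ne'
    · exact (continuousOn_const.sub continuousOn_id).rpow_const
        fun s hs => Or.inl (by intro hc; simp only [Pi.sub_apply, id_eq] at hc; linarith [hs.2])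
  have hg1 : IntegrableOn g (f '' uIcc a r) volume :=
    (cap_aux_intble (by positivity) (by norm_num)).mono_set himage'
  set ψ : ℝ → ℝ := fun t => -(2 / r ^ (n+1)) * Real.sqrt (r ^ 2 - t ^ 2) ^ n with hψ_def
  have hψ_cont : Continuous ψ := by
    apply Continuous.mul continuous_const
    exact (Real.continuous_sqrt.comp (by fun_prop)).pow n
  have hzero : ∀ᵐ t ∂(volume.restrict (Icc a r)), t ≠ (0:ℝ) := by
    simp only [ae_iff, not_not]
    have hs : {t : ℝ | t = 0} = {(0:ℝ)} := by ext; simp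
    rw [hs, Measure.restrict_apply (measurableSet_singleton 0)]
    exact measure_mono_null Set.inter_subset_left Real.volume_singleton
  have hae : (fun t => (g ∘ f) t * f' t) =ᵐ[volume.restrict (Icc a r)] ψ := by
    filter_upwards [ae_restrict_mem measurableSet_Icc, hzero] with t htm htne
    exact claim t htm htne
  have hg2 : IntegrableOn (fun t => (g ∘ f) t * f' t) (uIcc a r) volume := by
    rw [huIcc]
    exact (hψ_cont.integrableOn_Icc).congr hae.symm
  have hmain := intervalIntegral.integral_comp_mul_deriv''' hf_cont hff' hg_cont hg1 hg2
  rw [hfa, hfr] at hmain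
  have hzero' : ∀ᵐ t ∂(volume : Measure ℝ), t ≠ (0:ℝ) := by
    simp only [ae_iff, not_not]
    have hs : {t : ℝ | t = 0} = {(0:ℝ)} := by ext; simp
    rw [hs]; exact Real.volume_singleton
  have hleft : ∫ t in a..r, (g ∘ f) t * f' t
      = -(2 / r ^ (n+1)) * ∫ t in a..r, Real.sqrt (r ^ 2 - t ^ 2) ^ n := by
    rw [← intervalIntegral.integral_const_mul]
    apply intervalIntegral.integral_congr_ae
    filter_upwards [hzero'] with t htne htm
    rw [Set.uIoc_of_le har.le] at htm
    exact claim t (Ioc_subset_Icc_self htm) htne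
  rw [hleft, intervalIntegral.integral_symm 0 ((2 * r * h - h ^ 2) / r ^ 2)] at hmain
  linarith [hmain]


open intervalIntegral in
theorem spherical_cap_volume (d : ℕ) (hd : 0 < d) (r h : ℝ) (hh : 0 < h) (hhr : h ≤ r) :
    volume {x : EuclideanSpace ℝ (Fin d) | ‖x‖ ≤ r ∧ r - h ≤ x ⟨0, hd⟩}
      = ENNReal.ofReal
          (Real.pi ^ ((d : ℝ) / 2) * r ^ d / Real.Gamma ((d : ℝ) / 2 + 1) *
            ((1 / 2) * regIncBeta ((2 * r * h - h ^ 2) / r ^ 2) (((d : ℝ) + 1) / 2) (1 / 2))) := by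
  obtain ⟨n, rfl⟩ : ∃ n, d = n + 1 := ⟨d - 1, (Nat.succ_pred_eq_of_pos hd).symm⟩
  have hr : 0 < r := hh.trans_le hhr
  have har0 : 0 ≤ r - h := by linarith
  set T : Set (ℝ × (Fin n → ℝ)) :=
    {p | p.1 ^ 2 + ∑ i, p.2 i ^ 2 ≤ r ^ 2 ∧ r - h ≤ p.1} with hT_def
  have hTm : MeasurableSet T := by
    have h1 : Measurable fun p : ℝ × (Fin n → ℝ) => p.1 ^ 2 + ∑ i, p.2 i ^ 2 :=
      (measurable_fst.pow_const 2).add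
        (Finset.measurable_sum _ fun i _ => ((measurable_pi_apply i).comp measurable_snd).pow_const 2)
    exact (measurableSet_le h1 measurable_const).inter
      (measurableSet_le measurable_const measurable_fst)
  set e := (MeasurableEquiv.toLp 2 (Fin (n+1) → ℝ)).symm with he_def
  set ψ := MeasurableEquiv.piFinSuccAbove (fun _ : Fin (n+1) => ℝ) 0 with hψ_def
  have hset : {x : EuclideanSpace ℝ (Fin (n+1)) | ‖x‖ ≤ r ∧ r - h ≤ x ⟨0, hd⟩}
      = ⇑e ⁻¹' (⇑ψ ⁻¹' T) := by
    ext x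
    have hx0 : (⟨0, hd⟩ : Fin (n+1)) = 0 := by ext; simp
    have hnorm : ‖x‖ ≤ r ↔ ∑ i, x i ^ 2 ≤ r ^ 2 := by
      rw [EuclideanSpace.norm_eq, ← Real.sqrt_sq hr.le,
        Real.sqrt_le_sqrt_iff (by positivity)]
      simp_rw [Real.norm_eq_abs, sq_abs]
      rw [Real.sqrt_sq hr.le]
    have hsum := Fin.sum_univ_succAbove (fun i => x i ^ 2) 0
    simp only [Set.mem_setOf_eq, Set.mem_preimage, hT_def, hψ_def, he_def, hx0,
      MeasurableEquiv.piFinSuccAbove_apply, Fin.insertNthEquiv_symm_apply]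
    rw [hnorm, hsum]
    constructor
    · rintro ⟨h1, h2⟩; exact ⟨h1, h2⟩
    · rintro ⟨h1, h2⟩; exact ⟨h1, h2⟩
  rw [hset,
    (EuclideanSpace.volume_preserving_symm_measurableEquiv_toLp (Fin (n+1))).measure_preimage
      ((hTm.preimage ψ.measurable).nullMeasurableSet),
    (volume_preserving_piFinSuccAbove (fun _ : Fin (n+1) => ℝ) 0).measure_preimage
      hTm.nullMeasurableSet,
    Measure.volume_eq_prod, Measure.prod_apply hTm]
  -- compute the slice volumes
  have hind : ∀ t : ℝ, volume (Prod.mk t ⁻¹' T) = Set.indicator (Icc (r-h) r)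
      (fun t => ENNReal.ofReal
        (Real.sqrt Real.pi ^ n / Real.Gamma (n/2+1) * Real.sqrt (r^2 - t^2) ^ n)) t := by
    intro t
    by_cases h1 : r - h ≤ t
    · by_cases h2 : t ≤ r
      · have hmem : t ∈ Icc (r-h) r := ⟨h1, h2⟩
        have hpre : Prod.mk t ⁻¹' T = {y : Fin n → ℝ | ∑ i, y i ^ 2 ≤ r^2 - t^2} := by
          ext y
          simp only [hT_def, Set.mem_preimage, Set.mem_setOf_eq]
          constructor
          · rintro ⟨hA, _⟩; linarith
          · intro hA; exact ⟨by linarith, h1⟩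
        have hc : 0 ≤ r^2 - t^2 := by nlinarith
        rw [hpre, cap_aux_slice n hc, Set.indicator_of_mem hmem]
        congr 1
        ring
      · push_neg at h2
        have hpre : Prod.mk t ⁻¹' T = ∅ := by
          ext y
          simp only [hT_def, Set.mem_preimage, Set.mem_setOf_eq, Set.mem_empty_iff_false,
            iff_false, not_and]
          intro hA
          exfalso
          have hy : 0 ≤ ∑ i, y i ^ 2 := Finset.sum_nonneg fun i _ => sq_nonneg _
          nlinarith
        rw [hpre, measure_empty, Set.indicator_of_notMem (fun hm => absurd hm.2 (not_le.mpr h2))]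
    · have hpre : Prod.mk t ⁻¹' T = ∅ := by
        ext y
        simp only [hT_def, Set.mem_preimage, Set.mem_setOf_eq, Set.mem_empty_iff_false,
          iff_false, not_and]
        intro _
        exact h1
      rw [hpre, measure_empty, Set.indicator_of_notMem (fun hm => h1 hm.1)]
  rw [lintegral_congr hind, lintegral_indicator measurableSet_Icc _]
  have hφcont : Continuous fun t : ℝ =>
      Real.sqrt Real.pi ^ n / Real.Gamma (n/2+1) * Real.sqrt (r^2 - t^2) ^ n := by
    apply Continuous.mul continuous_const
    exact (Real.continuous_sqrt.comp (by fun_prop)).pow n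
  rw [← ofReal_integral_eq_lintegral_ofReal (hφcont.integrableOn_Icc)
    (Filter.Eventually.of_forall fun t => by positivity)]
  rw [MeasureTheory.integral_Icc_eq_integral_Ioc, ← intervalIntegral.integral_of_le (by linarith),
    intervalIntegral.integral_const_mul]
  -- now the right-hand side
  set J := ∫ t in (r-h)..r, Real.sqrt (r^2 - t^2) ^ n with hJ_def
  rw [regIncBeta]
  have hexp1 : ((↑(n+1) : ℝ) + 1)/2 - 1 = (n:ℝ)/2 := by push_cast; ring
  have hexp2 : (1:ℝ)/2 - 1 = (-(1/2) : ℝ) := by norm_num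
  rw [hexp1, hexp2]
  have hN := cap_aux_subst n hh hhr
  have hB := cap_aux_beta (p := ((↑(n+1) : ℝ) + 1)/2) (q := (1:ℝ)/2)
    (by positivity) (by norm_num)
  rw [hexp1, hexp2] at hB
  rw [hN, hB]
  congr 1
  -- pure real arithmetic
  have hGq : Real.Gamma ((1:ℝ)/2) = Real.sqrt Real.pi := Real.Gamma_one_half_eq
  have hpq : ((↑(n+1) : ℝ) + 1)/2 + 1/2 = (↑(n+1) : ℝ)/2 + 1 := by push_cast; ring
  have hp : ((↑(n+1) : ℝ) + 1)/2 = (n:ℝ)/2 + 1 := by push_cast; ring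
  rw [hGq, hpq, hp]
  have hG1 : 0 < Real.Gamma ((n:ℝ)/2 + 1) := Real.Gamma_pos_of_pos (by positivity)
  have hG2 : 0 < Real.Gamma ((↑(n+1) : ℝ)/2 + 1) := Real.Gamma_pos_of_pos (by positivity)
  have hsπ : 0 < Real.sqrt Real.pi := Real.sqrt_pos.mpr Real.pi_pos
  have hπn : Real.sqrt Real.pi ^ n = Real.pi ^ ((n:ℝ)/2) := by
    rw [Real.sqrt_eq_rpow, ← Real.rpow_natCast (Real.pi ^ ((1:ℝ)/2)) n,
      ← Real.rpow_mul Real.pi_pos.le]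
    norm_num
    congr 1
    ring
  have hπd : Real.pi ^ ((↑(n+1) : ℝ)/2) = Real.pi ^ ((n:ℝ)/2) * Real.sqrt Real.pi := by
    rw [Real.sqrt_eq_rpow, ← Real.rpow_add Real.pi_pos]
    congr 1
    push_cast
    ring
  rw [hπn, hπd]
  have hπ2 : (0:ℝ) < Real.pi ^ ((n:ℝ)/2) := Real.rpow_pos_of_pos Real.pi_pos _
  have hrn : (0:ℝ) < r ^ (n+1) := by positivity
  field_simp
  ring
end

section
/- Let d and k be positive integers, let Y be a Borel probability measure on R^d, let c be a point of R^d, and let theta be a real number. Let p = (Y tensor Y)({(y', y) : inner product of (y' - y) with (y - c) is at least theta}). Consider y drawn from Y and y_1, ..., y_k drawn independently from Y, all mutually independent. Then the probability that (1/k) * sum over i from 1 to k of the inner product of (y - y_i) with (y_i - c) is at least theta is at least p^k. -/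
open MeasureTheory
open scoped RealInnerProductSpace ENNReal

lemma pow_lintegral_le_aux {α : Type*} [MeasurableSpace α] (μ : Measure α)
    [IsProbabilityMeasure μ] {f : α → ℝ≥0∞} (hf : AEMeasurable f μ) {k : ℕ} (hk : 0 < k) :
    (∫⁻ a, f a ∂μ) ^ k ≤ ∫⁻ a, f a ^ k ∂μ := by
  have hk' : (0:ℝ) < k := Nat.cast_pos.mpr hk
  have h := ENNReal.lintegral_mul_norm_pow_le (μ := μ)
      (f := fun a => f a ^ (k:ℕ)) (g := fun _ => (1:ℝ≥0∞))
      (hf.pow_const k) aemeasurable_const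
      (p := 1/(k:ℝ)) (q := 1 - 1/(k:ℝ))
      (by positivity) (by
        have : 1/(k:ℝ) ≤ 1 := by
          rw [div_le_one hk']
          exact_mod_cast hk
        linarith) (by ring)
  simp only [ENNReal.one_rpow, mul_one, lintegral_one, measure_univ] at h
  have heq : ∀ a, (f a ^ (k:ℕ)) ^ (1/(k:ℝ)) = f a := by
    intro a
    rw [← ENNReal.rpow_natCast (f a) k, ← ENNReal.rpow_mul, mul_one_div, div_self hk'.ne',
      ENNReal.rpow_one]
  simp only [heq] at h
  calc (∫⁻ a, f a ∂μ) ^ k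
      ≤ ((∫⁻ a, f a ^ (k:ℕ) ∂μ) ^ (1/(k:ℝ))) ^ k := by exact pow_le_pow_left' h k
    _ = ∫⁻ a, f a ^ (k:ℕ) ∂μ := by
        rw [← ENNReal.rpow_natCast (_ ^ (1/(k:ℝ))) k, ← ENNReal.rpow_mul, one_div,
          inv_mul_cancel₀ hk'.ne', ENNReal.rpow_one]

theorem learning_lower_bound_Y (d k : ℕ) (hd : 0 < d) (hk : 0 < k)
    (Y : Measure (EuclideanSpace ℝ (Fin d))) [IsProbabilityMeasure Y]
    (c : EuclideanSpace ℝ (Fin d)) (θ : ℝ) :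
    ((Y.prod Y)
        {q : EuclideanSpace ℝ (Fin d) × EuclideanSpace ℝ (Fin d) |
          θ ≤ ⟪q.1 - q.2, q.2 - c⟫}) ^ k
      ≤ (Y.prod (Measure.pi fun _ : Fin k => Y))
          {p : EuclideanSpace ℝ (Fin d) × (Fin k → EuclideanSpace ℝ (Fin d)) |
            θ ≤ (1 / (k : ℝ)) * ∑ i, ⟪p.1 - p.2 i, p.2 i - c⟫} := by
  have hE : True := trivial
  -- measurability of the base set
  have hcont : Continuous fun q : EuclideanSpace ℝ (Fin d) × EuclideanSpace ℝ (Fin d) => ⟪q.1 - q.2, q.2 - c⟫ :=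
    (continuous_fst.sub continuous_snd).inner (continuous_snd.sub continuous_const)
  have hA : MeasurableSet {q : EuclideanSpace ℝ (Fin d) × EuclideanSpace ℝ (Fin d) | θ ≤ ⟪q.1 - q.2, q.2 - c⟫} :=
    measurableSet_le measurable_const hcont.measurable
  set f : EuclideanSpace ℝ (Fin d) → ℝ≥0∞ := fun y => Y {y' : EuclideanSpace ℝ (Fin d) | θ ≤ ⟪y - y', y' - c⟫} with hf_def
  have hfmeas : Measurable f := by
    exact measurable_measure_prodMk_left hA
  -- Step 1: prod measure equals lintegral of f
  have h1 : (Y.prod Y) {q : EuclideanSpace ℝ (Fin d) × EuclideanSpace ℝ (Fin d) | θ ≤ ⟪q.1 - q.2, q.2 - c⟫} = ∫⁻ y, f y ∂Y := by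
    rw [Measure.prod_apply hA]
    rfl
  -- the "all coordinates" set
  set B : Set (EuclideanSpace ℝ (Fin d) × (Fin k → EuclideanSpace ℝ (Fin d))) :=
    {p | ∀ i, θ ≤ ⟪p.1 - p.2 i, p.2 i - c⟫} with hB_def
  have hBmeas : MeasurableSet B := by
    have : B = ⋂ i, {p : EuclideanSpace ℝ (Fin d) × (Fin k → EuclideanSpace ℝ (Fin d)) | θ ≤ ⟪p.1 - p.2 i, p.2 i - c⟫} := by
      ext p; simp [hB_def]
    rw [this]
    refine MeasurableSet.iInter fun i => ?_
    have h2c : Continuous fun p : EuclideanSpace ℝ (Fin d) × (Fin k → EuclideanSpace ℝ (Fin d)) => p.2 i :=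
      (continuous_apply i).comp continuous_snd
    have hc : Continuous fun p : EuclideanSpace ℝ (Fin d) × (Fin k → EuclideanSpace ℝ (Fin d)) => ⟪p.1 - p.2 i, p.2 i - c⟫ :=
      (continuous_fst.sub h2c).inner (h2c.sub continuous_const)
    exact measurableSet_le measurable_const hc.measurable
  -- Step 2: measure of B equals ∫ f^k
  have h2 : (Y.prod (Measure.pi fun _ : Fin k => Y)) B = ∫⁻ y, f y ^ k ∂Y := by
    rw [Measure.prod_apply hBmeas]
    refine lintegral_congr fun y => ?_
    have hset : (Prod.mk y ⁻¹' B) = Set.pi Set.univ fun _ : Fin k =>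
        {y' : EuclideanSpace ℝ (Fin d) | θ ≤ ⟪y - y', y' - c⟫} := by
      ext g; simp [hB_def, Set.mem_pi]
    rw [hset, Measure.pi_pi]
    simp [hf_def, Finset.prod_const]
  -- Step 3: B subset of target
  have h3 : B ⊆ {p : EuclideanSpace ℝ (Fin d) × (Fin k → EuclideanSpace ℝ (Fin d)) | θ ≤ (1 / (k : ℝ)) * ∑ i, ⟪p.1 - p.2 i, p.2 i - c⟫} := by
    intro p hp
    have hk' : (0:ℝ) < k := Nat.cast_pos.mpr hk
    have hsum : (k:ℝ) * θ ≤ ∑ i, ⟪p.1 - p.2 i, p.2 i - c⟫ := by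
      calc (k:ℝ) * θ = ∑ _i : Fin k, θ := by simp [mul_comm]
        _ ≤ _ := Finset.sum_le_sum fun i _ => hp i
    simp only [Set.mem_setOf_eq]
    calc θ = (1/(k:ℝ)) * ((k:ℝ) * θ) := by field_simp
      _ ≤ (1/(k:ℝ)) * ∑ i, ⟪p.1 - p.2 i, p.2 i - c⟫ := by
          apply mul_le_mul_of_nonneg_left hsum (by positivity)
  calc ((Y.prod Y) {q : EuclideanSpace ℝ (Fin d) × EuclideanSpace ℝ (Fin d) | θ ≤ ⟪q.1 - q.2, q.2 - c⟫}) ^ k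
      = (∫⁻ y, f y ∂Y) ^ k := by rw [h1]
    _ ≤ ∫⁻ y, f y ^ k ∂Y := pow_lintegral_le_aux Y hfmeas.aemeasurable hk
    _ = (Y.prod (Measure.pi fun _ : Fin k => Y)) B := h2.symm
    _ ≤ _ := measure_mono h3
end

section
/- Let d and k be positive integers, let Y be a Borel probability measure on R^d, let c be a point of R^d, and let theta be a real number. Let p = (Y tensor Y)({(y', y) : inner product of (y' - y) with (y - c) is at least theta}). Consider y drawn from Y and y_1, ..., y_k drawn independently from Y, all mutually independent. Then the probability that (1/k) * sum over i from 1 to k of the inner product of (y - y_i) with (y_i - c) is at least theta is at most 1 - (1 - p)^k. -/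
open MeasureTheory
open scoped RealInnerProductSpace ENNReal

lemma pow_lintegral_le {α : Type*} [MeasurableSpace α] (μ : Measure α) [IsProbabilityMeasure μ]
    {g : α → ℝ≥0∞} (hg : Measurable g) (k : ℕ) (hk : 0 < k) :
    (∫⁻ a, g a ∂μ) ^ k ≤ ∫⁻ a, g a ^ k ∂μ := by
  rcases eq_or_lt_of_le (Nat.one_le_iff_ne_zero.mpr hk.ne') with h1 | h1
  · simp [← h1]
  have hp : (1 : ℝ) < (k : ℝ) := by exact_mod_cast h1
  have hpq : (k : ℝ).HolderConjugate (Real.conjExponent k) :=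
    Real.HolderConjugate.conjExponent hp
  have := ENNReal.lintegral_mul_le_Lp_mul_Lq μ hpq hg.aemeasurable
    (measurable_const (a := (1:ℝ≥0∞))).aemeasurable
  simp only [Pi.mul_apply, mul_one, ENNReal.one_rpow, lintegral_const, measure_univ,
    ENNReal.one_rpow, one_mul] at this
  have hkne : (k : ℝ) ≠ 0 := by positivity
  calc (∫⁻ a, g a ∂μ) ^ k ≤ ((∫⁻ a, g a ^ (k:ℝ) ∂μ) ^ (1 / (k:ℝ))) ^ k := by
        gcongr
    _ = ∫⁻ a, g a ^ k ∂μ := by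
        rw [← ENNReal.rpow_natCast (((∫⁻ a, g a ^ (k:ℝ) ∂μ)) ^ (1 / (k:ℝ))) k,
          ← ENNReal.rpow_mul, one_div, inv_mul_cancel₀ hkne, ENNReal.rpow_one]
        congr 1
        ext a
        rw [← ENNReal.rpow_natCast]

theorem learning_upper_bound_Y (d k : ℕ) (hd : 0 < d) (hk : 0 < k)
    (Y : Measure (EuclideanSpace ℝ (Fin d))) [IsProbabilityMeasure Y]
    (c : EuclideanSpace ℝ (Fin d)) (θ : ℝ) :
    (Y.prod (Measure.pi fun _ : Fin k => Y))
        {p : EuclideanSpace ℝ (Fin d) × (Fin k → EuclideanSpace ℝ (Fin d)) |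
          θ ≤ (1 / (k : ℝ)) * ∑ i, ⟪p.1 - p.2 i, p.2 i - c⟫}
      ≤ 1 - (1 - (Y.prod Y)
          {q : EuclideanSpace ℝ (Fin d) × EuclideanSpace ℝ (Fin d) |
            θ ≤ ⟪q.1 - q.2, q.2 - c⟫}) ^ k := by
  set ν : Measure (Fin k → EuclideanSpace ℝ (Fin d)) := Measure.pi fun _ : Fin k => Y with hν
  set μ : Measure (EuclideanSpace ℝ (Fin d) × (Fin k → EuclideanSpace ℝ (Fin d))) := Y.prod ν with hμ
  haveI hνP : IsProbabilityMeasure ν := hν ▸ inferInstance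
  haveI hμP : IsProbabilityMeasure μ := hμ ▸ inferInstance
  have hfc : Continuous fun q : EuclideanSpace ℝ (Fin d) × EuclideanSpace ℝ (Fin d) => ⟪q.1 - q.2, q.2 - c⟫ :=
    (continuous_fst.sub continuous_snd).inner (continuous_snd.sub continuous_const)
  set A : Set (EuclideanSpace ℝ (Fin d) × EuclideanSpace ℝ (Fin d)) := {q | θ ≤ ⟪q.1 - q.2, q.2 - c⟫} with hAdef
  have hA : MeasurableSet A := (isClosed_le continuous_const hfc).measurableSet
  set S : Fin k → Set (EuclideanSpace ℝ (Fin d) × (Fin k → EuclideanSpace ℝ (Fin d))) :=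
    fun i => {p | θ ≤ ⟪p.1 - p.2 i, p.2 i - c⟫} with hSdef
  have hS : ∀ i, MeasurableSet (S i) := by
    intro i
    have : S i = (fun p : EuclideanSpace ℝ (Fin d) × (Fin k → EuclideanSpace ℝ (Fin d)) => (p.1, p.2 i)) ⁻¹' A := rfl
    rw [this]
    exact hA.preimage (measurable_fst.prodMk ((measurable_pi_apply i).comp measurable_snd))
  set U : Set (EuclideanSpace ℝ (Fin d) × (Fin k → EuclideanSpace ℝ (Fin d))) := ⋃ i, S i with hUdef
  have hU : MeasurableSet U := MeasurableSet.iUnion hS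
  -- inclusion
  have hincl : {p : EuclideanSpace ℝ (Fin d) × (Fin k → EuclideanSpace ℝ (Fin d)) |
      θ ≤ (1 / (k : ℝ)) * ∑ i, ⟪p.1 - p.2 i, p.2 i - c⟫} ⊆ U := by
    intro p hp
    by_contra h
    simp only [hUdef, Set.mem_iUnion, not_exists, hSdef, Set.mem_setOf_eq, not_le] at h
    haveI : Nonempty (Fin k) := Fin.pos_iff_nonempty.mp hk
    have hsum : ∑ i, ⟪p.1 - p.2 i, p.2 i - c⟫ < ∑ _i : Fin k, θ :=
      Finset.sum_lt_sum_of_nonempty (Finset.univ_nonempty) fun i _ => h i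
    have hkpos : (0:ℝ) < k := by exact_mod_cast hk
    have : (1 / (k : ℝ)) * ∑ i, ⟪p.1 - p.2 i, p.2 i - c⟫ < θ := by
      rw [Finset.sum_const, Finset.card_univ, Fintype.card_fin, nsmul_eq_mul] at hsum
      calc (1 / (k : ℝ)) * ∑ i, ⟪p.1 - p.2 i, p.2 i - c⟫
          < (1 / (k : ℝ)) * ((k:ℝ) * θ) := by
            apply mul_lt_mul_of_pos_left hsum (by positivity)
        _ = θ := by field_simp
    exact absurd hp (not_le.mpr this)
  -- the section function
  set g : EuclideanSpace ℝ (Fin d) → ℝ≥0∞ := fun y => Y ((Prod.mk y ⁻¹' A)ᶜ) with hgdef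
  have hg : Measurable g :=
    measurable_measure_prodMk_left hA.compl
  -- compute μ Uᶜ
  have hUc : μ Uᶜ = ∫⁻ y, g y ^ k ∂Y := by
    rw [Measure.prod_apply hU.compl]
    congr 1
    ext y
    have hpre : Prod.mk y ⁻¹' Uᶜ = Set.pi Set.univ (fun _ : Fin k => (Prod.mk y ⁻¹' A)ᶜ) := by
      ext v
      simp [hUdef, hSdef, hAdef, Set.mem_pi, not_le]
    rw [hpre, hν, Measure.pi_pi]
    simp [hgdef]
  -- compute ∫ g
  have hint : ∫⁻ y, g y ∂Y = 1 - (Y.prod Y) A := by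
    have h1 : ∀ y, g y = 1 - Y (Prod.mk y ⁻¹' A) := fun y =>
      prob_compl_eq_one_sub (hA.preimage measurable_prodMk_left)
    have hm : Measurable fun y => Y (Prod.mk y ⁻¹' A) :=
      measurable_measure_prodMk_left hA
    have hfin : ∫⁻ y, Y (Prod.mk y ⁻¹' A) ∂Y ≠ ∞ := by
      rw [← Measure.prod_apply hA]
      exact (measure_lt_top _ _).ne
    calc ∫⁻ y, g y ∂Y = ∫⁻ y, 1 - Y (Prod.mk y ⁻¹' A) ∂Y := by
          simp only [h1]
      _ = (∫⁻ _, 1 ∂Y) - ∫⁻ y, Y (Prod.mk y ⁻¹' A) ∂Y := by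
          apply lintegral_sub hm hfin
          exact Filter.Eventually.of_forall fun y => prob_le_one
      _ = 1 - (Y.prod Y) A := by
          rw [lintegral_const, one_mul, measure_univ, Measure.prod_apply hA]
  -- Jensen
  have hJ : (1 - (Y.prod Y) A) ^ k ≤ μ Uᶜ := by
    rw [hUc, ← hint]
    exact pow_lintegral_le Y hg k hk
  calc μ {p : EuclideanSpace ℝ (Fin d) × (Fin k → EuclideanSpace ℝ (Fin d)) |
      θ ≤ (1 / (k : ℝ)) * ∑ i, ⟪p.1 - p.2 i, p.2 i - c⟫} ≤ μ U := measure_mono hincl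
    _ = 1 - μ Uᶜ := by
        nth_rewrite 1 [← compl_compl U]; exact prob_compl_eq_one_sub (μ := μ) hU.compl
    _ ≤ 1 - (1 - (Y.prod Y) A) ^ k := tsub_le_tsub_left hJ 1
end

section
/- Let d and k be positive integers, let X and Y be Borel probability measures on R^d, and let c be a point of R^d. Let p_Y = (Y tensor Y)({(y', y) : inner product of (y' - y) with (y - c) is at least 0}) and p_{YX} = (X tensor Y)({(x, y) : inner product of (x - y) with (y - c) is at least 0}), and suppose p_Y > 0 and p_{YX} > 0. Define n(Y) and n(Y,X) by p_Y = 2^(-(n(Y)+1)) and p_{YX} = 2^(-(n(Y,X)+1)). Consider independent samples y_1, ..., y_k from Y, and independent evaluation points y from Y and x from X. Then: (i) the probability that the sum over i from 1 to k of the inner product of (y - y_i) with (y_i - c) is nonnegative lies between 2^(-k(n(Y)+1)) and 1 - (1 - 2^(-(n(Y)+1)))^k; and (ii) the probability that the sum over i from 1 to k of the inner product of (x - y_i) with (y_i - c) is negative lies between (1 - 2^(-(n(Y,X)+1)))^k and 1 - 2^(-k(n(Y,X)+1)). -/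
open MeasureTheory Set
open scoped RealInnerProductSpace

theorem intrinsic_aux {d k : ℕ} (hk : 0 < k)
    (μ Y : Measure (EuclideanSpace ℝ (Fin d)))
    [IsProbabilityMeasure μ] [IsProbabilityMeasure Y]
    (c : EuclideanSpace ℝ (Fin d)) :
    ((μ.prod Y) {q : EuclideanSpace ℝ (Fin d) × EuclideanSpace ℝ (Fin d) |
        0 ≤ ⟪q.1 - q.2, q.2 - c⟫}).toReal ^ k
      ≤ ((μ.prod (Measure.pi fun _ : Fin k => Y))
          {p : EuclideanSpace ℝ (Fin d) × (Fin k → EuclideanSpace ℝ (Fin d)) |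
            0 ≤ ∑ i, ⟪p.1 - p.2 i, p.2 i - c⟫}).toReal
    ∧ ((μ.prod (Measure.pi fun _ : Fin k => Y))
          {p : EuclideanSpace ℝ (Fin d) × (Fin k → EuclideanSpace ℝ (Fin d)) |
            0 ≤ ∑ i, ⟪p.1 - p.2 i, p.2 i - c⟫}).toReal
      ≤ 1 - (1 - ((μ.prod Y) {q : EuclideanSpace ℝ (Fin d) × EuclideanSpace ℝ (Fin d) |
          0 ≤ ⟪q.1 - q.2, q.2 - c⟫}).toReal) ^ k := by
  haveI : Nonempty (Fin k) := ⟨⟨0, hk⟩⟩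
  set S : Set (EuclideanSpace ℝ (Fin d) × EuclideanSpace ℝ (Fin d)) := {q | 0 ≤ ⟪q.1 - q.2, q.2 - c⟫} with hSdef
  have hS : MeasurableSet S := by
    apply measurableSet_le measurable_const
    exact (Continuous.inner (continuous_fst.sub continuous_snd)
      (continuous_snd.sub continuous_const)).measurable
  set f : EuclideanSpace ℝ (Fin d) → ENNReal := fun x => Y (Prod.mk x ⁻¹' S) with hfdef
  have hf_meas : Measurable f := measurable_measure_prodMk_left hS
  have hf_le : ∀ x, f x ≤ 1 := fun x => prob_le_one
  have hA : ∀ x : EuclideanSpace ℝ (Fin d), MeasurableSet (Prod.mk x ⁻¹' S) :=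
    fun x => hS.preimage measurable_prodMk_left
  -- continuity of each coordinate inner product
  have hcont : ∀ i : Fin k, Continuous fun p : EuclideanSpace ℝ (Fin d) × (Fin k → EuclideanSpace ℝ (Fin d)) =>
      ⟪p.1 - p.2 i, p.2 i - c⟫ := by
    intro i
    exact Continuous.inner (continuous_fst.sub ((continuous_apply i).comp continuous_snd))
      (((continuous_apply i).comp continuous_snd).sub continuous_const)
  set Ssum : Set (EuclideanSpace ℝ (Fin d) × (Fin k → EuclideanSpace ℝ (Fin d))) := {p | 0 ≤ ∑ i, ⟪p.1 - p.2 i, p.2 i - c⟫} with hSsumdef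
  have hSsum : MeasurableSet Ssum := by
    apply measurableSet_le measurable_const
    exact (continuous_finset_sum _ fun i _ => hcont i).measurable
  set Sall : Set (EuclideanSpace ℝ (Fin d) × (Fin k → EuclideanSpace ℝ (Fin d))) := {p | ∀ i, 0 ≤ ⟪p.1 - p.2 i, p.2 i - c⟫} with hSalldef
  have hSall : MeasurableSet Sall := by
    have : Sall = ⋂ i, {p : EuclideanSpace ℝ (Fin d) × (Fin k → EuclideanSpace ℝ (Fin d)) | 0 ≤ ⟪p.1 - p.2 i, p.2 i - c⟫} := by
      ext p; simp [hSalldef]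
    rw [this]
    exact MeasurableSet.iInter fun i => measurableSet_le measurable_const (hcont i).measurable
  set Sneg : Set (EuclideanSpace ℝ (Fin d) × (Fin k → EuclideanSpace ℝ (Fin d))) := {p | ∀ i, ⟪p.1 - p.2 i, p.2 i - c⟫ < 0} with hSnegdef
  have hSneg : MeasurableSet Sneg := by
    have : Sneg = ⋂ i, {p : EuclideanSpace ℝ (Fin d) × (Fin k → EuclideanSpace ℝ (Fin d)) | ⟪p.1 - p.2 i, p.2 i - c⟫ < 0} := by
      ext p; simp [hSnegdef]
    rw [this]
    exact MeasurableSet.iInter fun i => measurableSet_lt (hcont i).measurable measurable_const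
  -- prod measure computations
  have hprodS : (μ.prod Y) S = ∫⁻ x, f x ∂μ := by
    rw [Measure.prod_apply hS]
  have hsec_all : ∀ x : EuclideanSpace ℝ (Fin d), Prod.mk x ⁻¹' Sall = Set.pi Set.univ
      (fun _ : Fin k => Prod.mk x ⁻¹' S) := by
    intro x; ext g; simp [hSalldef, hSdef, Set.mem_pi]
  have hprodAll : (μ.prod (Measure.pi fun _ : Fin k => Y)) Sall = ∫⁻ x, f x ^ k ∂μ := by
    rw [Measure.prod_apply hSall]
    refine lintegral_congr fun x => ?_
    rw [hsec_all x, Measure.pi_pi]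
    simp [hfdef, Finset.prod_const]
  have hsec_neg : ∀ x : EuclideanSpace ℝ (Fin d), Prod.mk x ⁻¹' Sneg = Set.pi Set.univ
      (fun _ : Fin k => (Prod.mk x ⁻¹' S)ᶜ) := by
    intro x; ext g; simp [hSnegdef, hSdef, Set.mem_pi, not_le]
  have hprodNeg : (μ.prod (Measure.pi fun _ : Fin k => Y)) Sneg = ∫⁻ x, (1 - f x) ^ k ∂μ := by
    rw [Measure.prod_apply hSneg]
    refine lintegral_congr fun x => ?_
    rw [hsec_neg x, Measure.pi_pi]
    simp [hfdef, Finset.prod_const, prob_compl_eq_one_sub (hA x)]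
  -- inclusions
  have hsub1 : Sall ⊆ Ssum := fun p hp => Finset.sum_nonneg fun i _ => hp i
  have hsub2 : Sneg ⊆ Ssumᶜ := by
    intro p hp
    simp only [Set.mem_compl_iff, hSsumdef, Set.mem_setOf_eq, not_le]
    exact Finset.sum_neg (fun i _ => hp i) Finset.univ_nonempty
  -- real-valued function
  set F : EuclideanSpace ℝ (Fin d) → ℝ := fun x => (f x).toReal with hFdef
  have hF_meas : Measurable F := hf_meas.ennreal_toReal
  have hF01 : ∀ x, F x ∈ Set.Icc (0:ℝ) 1 := by
    intro x
    exact ⟨ENNReal.toReal_nonneg, by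
      simpa using ENNReal.toReal_mono ENNReal.one_ne_top (hf_le x)⟩
  have hbdd : ∀ (G : EuclideanSpace ℝ (Fin d) → ℝ), (∀ x, G x ∈ Set.Icc (0:ℝ) 1) → Measurable G → Integrable G μ := by
    intro G hG hGm
    refine ⟨hGm.aestronglyMeasurable, ?_⟩
    apply HasFiniteIntegral.of_bounded (C := 1)
    filter_upwards with x
    rw [Real.norm_eq_abs, abs_of_nonneg (hG x).1]
    exact (hG x).2
  have hFi : Integrable F μ := hbdd F hF01 hF_meas
  have hFki : Integrable (fun x => F x ^ k) μ :=
    hbdd _ (fun x => ⟨pow_nonneg (hF01 x).1 k, pow_le_one₀ (hF01 x).1 (hF01 x).2⟩)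
      (hF_meas.pow_const k)
  have hGi : Integrable (fun x => 1 - F x) μ := hbdd _
    (fun x => ⟨by linarith [(hF01 x).2], by linarith [(hF01 x).1]⟩)
    (measurable_const.sub hF_meas)
  have hGki : Integrable (fun x => (1 - F x) ^ k) μ := hbdd _
    (fun x => ⟨pow_nonneg (by linarith [(hF01 x).2]) k,
      pow_le_one₀ (by linarith [(hF01 x).2]) (by linarith [(hF01 x).1])⟩)
    ((measurable_const.sub hF_meas).pow_const k)
  -- Jensen
  have jensen : ∀ (G : EuclideanSpace ℝ (Fin d) → ℝ), (∀ x, 0 ≤ G x) → Integrable G μ →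
      Integrable (fun x => G x ^ k) μ → (∫ x, G x ∂μ) ^ k ≤ ∫ x, G x ^ k ∂μ := by
    intro G hG hGi hGki
    exact (convexOn_pow k).map_integral_le (continuous_pow k).continuousOn isClosed_Ici
      (Filter.Eventually.of_forall hG) hGi hGki
  -- relate lintegrals and integrals
  have htoReal : (∫⁻ x, f x ∂μ).toReal = ∫ x, F x ∂μ := by
    rw [integral_toReal hf_meas.aemeasurable]
    filter_upwards with x
    exact lt_of_le_of_lt (hf_le x) ENNReal.one_lt_top
  have htoRealK : (∫⁻ x, f x ^ k ∂μ).toReal = ∫ x, F x ^ k ∂μ := by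
    rw [← integral_toReal (hf_meas.pow_const k).aemeasurable
      (Filter.Eventually.of_forall fun x =>
        lt_of_le_of_lt (pow_le_one' (hf_le x) k) ENNReal.one_lt_top)]
    refine integral_congr_ae (Filter.Eventually.of_forall fun x => ?_)
    simp [hFdef, ENNReal.toReal_pow]
  have hsub_toReal : ∀ x, ((1 : ENNReal) - f x).toReal = 1 - F x := by
    intro x
    rw [ENNReal.toReal_sub_of_le (hf_le x) ENNReal.one_ne_top, ENNReal.toReal_one]
  have htoRealNeg : (∫⁻ x, (1 - f x) ^ k ∂μ).toReal = ∫ x, (1 - F x) ^ k ∂μ := by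
    rw [← integral_toReal (show AEMeasurable (fun x => (1 - f x) ^ k) μ from
        ((measurable_const.sub hf_meas).pow_const k).aemeasurable)
      (Filter.Eventually.of_forall fun x =>
        lt_of_le_of_lt (pow_le_one' tsub_le_self k) ENNReal.one_lt_top)]
    refine integral_congr_ae (Filter.Eventually.of_forall fun x => ?_)
    simp only [ENNReal.toReal_pow, hsub_toReal x]
  have hIntSub : ∫ x, (1 - F x) ∂μ = 1 - ∫ x, F x ∂μ := by
    rw [integral_sub (integrable_const 1) hFi]
    simp
  set p : ℝ := ((μ.prod Y) S).toReal with hpdef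
  have hp_eq : p = ∫ x, F x ∂μ := by rw [hpdef, hprodS, htoReal]
  -- lower bound
  have hlow : p ^ k ≤ ((μ.prod (Measure.pi fun _ : Fin k => Y)) Ssum).toReal := by
    calc p ^ k = (∫ x, F x ∂μ) ^ k := by rw [hp_eq]
    _ ≤ ∫ x, F x ^ k ∂μ := jensen F (fun x => (hF01 x).1) hFi hFki
    _ = ((μ.prod (Measure.pi fun _ : Fin k => Y)) Sall).toReal := by
        rw [hprodAll, htoRealK]
    _ ≤ _ := ENNReal.toReal_mono (measure_ne_top _ _) (measure_mono hsub1)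
  -- upper bound
  have hup : ((μ.prod (Measure.pi fun _ : Fin k => Y)) Ssum).toReal ≤ 1 - (1 - p) ^ k := by
    have h1 : (1 - p) ^ k ≤ ((μ.prod (Measure.pi fun _ : Fin k => Y)) Sneg).toReal := by
      calc (1 - p) ^ k = (∫ x, (1 - F x) ∂μ) ^ k := by rw [hIntSub, hp_eq]
      _ ≤ ∫ x, (1 - F x) ^ k ∂μ :=
          jensen _ (fun x => by linarith [(hF01 x).2]) hGi hGki
      _ = _ := by rw [hprodNeg, htoRealNeg]
    have h2 : ((μ.prod (Measure.pi fun _ : Fin k => Y)) Ssum).toReal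
        ≤ ((μ.prod (Measure.pi fun _ : Fin k => Y)) Snegᶜ).toReal :=
      ENNReal.toReal_mono (measure_ne_top _ _)
        (measure_mono (Set.subset_compl_comm.mp hsub2))
    have h3 : ((μ.prod (Measure.pi fun _ : Fin k => Y)) Snegᶜ).toReal
        = 1 - ((μ.prod (Measure.pi fun _ : Fin k => Y)) Sneg).toReal := by
      rw [prob_compl_eq_one_sub hSneg,
        ENNReal.toReal_sub_of_le prob_le_one ENNReal.one_ne_top, ENNReal.toReal_one]
    linarith
  exact ⟨hlow, hup⟩

theorem intrinsic_dimension_and_learning (d k : ℕ) (hd : 0 < d) (hk : 0 < k)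
    (X Y : Measure (EuclideanSpace ℝ (Fin d)))
    [IsProbabilityMeasure X] [IsProbabilityMeasure Y]
    (c : EuclideanSpace ℝ (Fin d)) (nY nYX : ℝ)
    -- `p_Y = 2^{-(n(Y)+1)} > 0` defines the intrinsic dimension `n(Y)` of `Y`
    (hnY : ((Y.prod Y)
        {q : EuclideanSpace ℝ (Fin d) × EuclideanSpace ℝ (Fin d) |
          0 ≤ ⟪q.1 - q.2, q.2 - c⟫}).toReal = 2 ^ (-(nY + 1)))
    -- `p_{YX} = 2^{-(n(Y,X)+1)} > 0` defines the relative intrinsic dimension `n(Y,X)`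
    (hnYX : ((X.prod Y)
        {q : EuclideanSpace ℝ (Fin d) × EuclideanSpace ℝ (Fin d) |
          0 ≤ ⟪q.1 - q.2, q.2 - c⟫}).toReal = 2 ^ (-(nYX + 1))) :
    (2 ^ (-((k : ℝ) * (nY + 1)))
        ≤ ((Y.prod (Measure.pi fun _ : Fin k => Y))
            {p : EuclideanSpace ℝ (Fin d) × (Fin k → EuclideanSpace ℝ (Fin d)) |
              0 ≤ ∑ i, ⟪p.1 - p.2 i, p.2 i - c⟫}).toReal
      ∧ ((Y.prod (Measure.pi fun _ : Fin k => Y))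
            {p : EuclideanSpace ℝ (Fin d) × (Fin k → EuclideanSpace ℝ (Fin d)) |
              0 ≤ ∑ i, ⟪p.1 - p.2 i, p.2 i - c⟫}).toReal
          ≤ 1 - (1 - 2 ^ (-(nY + 1))) ^ k)
    ∧ ((1 - 2 ^ (-(nYX + 1))) ^ k
        ≤ ((X.prod (Measure.pi fun _ : Fin k => Y))
            {p : EuclideanSpace ℝ (Fin d) × (Fin k → EuclideanSpace ℝ (Fin d)) |
              ∑ i, ⟪p.1 - p.2 i, p.2 i - c⟫ < 0}).toReal
      ∧ ((X.prod (Measure.pi fun _ : Fin k => Y))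
            {p : EuclideanSpace ℝ (Fin d) × (Fin k → EuclideanSpace ℝ (Fin d)) |
              ∑ i, ⟪p.1 - p.2 i, p.2 i - c⟫ < 0}).toReal
          ≤ 1 - 2 ^ (-((k : ℝ) * (nYX + 1)))) := by
  obtain ⟨h1l, h1u⟩ := intrinsic_aux hk Y Y c
  obtain ⟨h2l, h2u⟩ := intrinsic_aux hk X Y c
  rw [hnY] at h1l h1u
  rw [hnYX] at h2l h2u
  have hpow : ∀ n : ℝ, (2:ℝ) ^ (-((k:ℝ) * (n + 1))) = ((2:ℝ) ^ (-(n+1))) ^ k := by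
    intro n
    rw [show -((k:ℝ)*(n+1)) = (-(n+1)) * (k:ℝ) by ring, Real.rpow_mul (by norm_num),
      Real.rpow_natCast]
  refine ⟨⟨by rw [hpow]; exact h1l, h1u⟩, ?_⟩
  have hcont : ∀ i : Fin k, Continuous fun p : EuclideanSpace ℝ (Fin d) × (Fin k → EuclideanSpace ℝ (Fin d)) =>
      ⟪p.1 - p.2 i, p.2 i - c⟫ := by
    intro i
    exact Continuous.inner (continuous_fst.sub ((continuous_apply i).comp continuous_snd))
      (((continuous_apply i).comp continuous_snd).sub continuous_const)
  have hSsum : MeasurableSet {p : EuclideanSpace ℝ (Fin d) ×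
      (Fin k → EuclideanSpace ℝ (Fin d)) | 0 ≤ ∑ i, ⟪p.1 - p.2 i, p.2 i - c⟫} := by
    apply measurableSet_le measurable_const
    exact (continuous_finset_sum _ fun i _ => hcont i).measurable
  have hseteq : {p : EuclideanSpace ℝ (Fin d) × (Fin k → EuclideanSpace ℝ (Fin d)) |
      ∑ i, ⟪p.1 - p.2 i, p.2 i - c⟫ < 0}
      = {p : EuclideanSpace ℝ (Fin d) × (Fin k → EuclideanSpace ℝ (Fin d)) |
          0 ≤ ∑ i, ⟪p.1 - p.2 i, p.2 i - c⟫}ᶜ := by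
    ext p; simp [not_le]
  have hcompl : ((X.prod (Measure.pi fun _ : Fin k => Y))
      {p : EuclideanSpace ℝ (Fin d) × (Fin k → EuclideanSpace ℝ (Fin d)) |
        ∑ i, ⟪p.1 - p.2 i, p.2 i - c⟫ < 0}).toReal
      = 1 - ((X.prod (Measure.pi fun _ : Fin k => Y))
      {p : EuclideanSpace ℝ (Fin d) × (Fin k → EuclideanSpace ℝ (Fin d)) |
        0 ≤ ∑ i, ⟪p.1 - p.2 i, p.2 i - c⟫}).toReal := by
    rw [hseteq, prob_compl_eq_one_sub hSsum,
      ENNReal.toReal_sub_of_le prob_le_one ENNReal.one_ne_top, ENNReal.toReal_one]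
  rw [hcompl, hpow]
  constructor <;> linarith
end

section
/- Let alpha and beta be measurable spaces, let nu be a probability measure on alpha and mu a probability measure on beta, let k be a positive integer, and let S be a measurable subset of alpha x beta. Then the probability, under the product of nu with the k-fold product of mu with itself, of the set of pairs (a, (b_1, ..., b_k)) such that (a, b_i) belongs to S for every i from 1 to k, is at least ((nu tensor mu)(S))^k. -/
open MeasureTheory

lemma pow_lintegral_le_lintegral_pow {α : Type*} [MeasurableSpace α] (ν : Measure α)
    [IsProbabilityMeasure ν] {g : α → ENNReal} (hg : Measurable g) (k : ℕ) (hk : 0 < k) :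
    (∫⁻ a, g a ∂ν) ^ k ≤ ∫⁻ a, g a ^ k ∂ν := by
  rcases eq_or_lt_of_le (Nat.one_le_iff_ne_zero.mpr hk.ne') with h1 | h1
  · simp [← h1]
  -- k ≥ 2, use Hölder
  have hk1 : (1 : ℝ) < (k : ℝ) := by exact_mod_cast h1
  have hpq : Real.HolderConjugate (k : ℝ) ((k : ℝ)).conjExponent :=
    Real.HolderConjugate.conjExponent hk1
  have holder := ENNReal.lintegral_mul_le_Lp_mul_Lq ν hpq hg.aemeasurable
    (aemeasurable_const (b := (1 : ENNReal)))
  simp only [Pi.mul_apply, mul_one, ENNReal.one_rpow, lintegral_const, measure_univ,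
    ENNReal.one_rpow, one_mul] at holder
  -- holder : ∫⁻ g ≤ (∫⁻ g^(k:ℝ))^(1/k)
  have h2 : (∫⁻ a, g a ∂ν) ^ (k : ℝ) ≤ ((∫⁻ a, g a ^ (k : ℝ) ∂ν) ^ (1 / (k : ℝ))) ^ (k : ℝ) := by
    exact ENNReal.rpow_le_rpow holder (by positivity)
  rw [← ENNReal.rpow_mul, one_div,
    inv_mul_cancel₀ (by positivity : (k : ℝ) ≠ 0), ENNReal.rpow_one] at h2
  calc (∫⁻ a, g a ∂ν) ^ k = (∫⁻ a, g a ∂ν) ^ (k : ℝ) := by rw [ENNReal.rpow_natCast]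
    _ ≤ ∫⁻ a, g a ^ (k : ℝ) ∂ν := h2
    _ = ∫⁻ a, g a ^ k ∂ν := by simp_rw [ENNReal.rpow_natCast]

theorem prod_pi_all_mem_ge_pow {α β : Type*} [MeasurableSpace α] [MeasurableSpace β]
    (ν : Measure α) (μ : Measure β) [IsProbabilityMeasure ν] [IsProbabilityMeasure μ]
    (k : ℕ) (hk : 0 < k) (S : Set (α × β)) (hS : MeasurableSet S) :
    ((ν.prod μ) S) ^ k
      ≤ (ν.prod (Measure.pi fun _ : Fin k => μ))
          {p : α × (Fin k → β) | ∀ i : Fin k, (p.1, p.2 i) ∈ S} := by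
  have hT : MeasurableSet {p : α × (Fin k → β) | ∀ i : Fin k, (p.1, p.2 i) ∈ S} := by
    rw [Set.setOf_forall]
    exact MeasurableSet.iInter fun i =>
      (measurable_fst.prodMk ((measurable_pi_apply i).comp measurable_snd)) hS
  rw [Measure.prod_apply hS, Measure.prod_apply hT]
  have hslice : ∀ a : α,
      (Prod.mk a ⁻¹' {p : α × (Fin k → β) | ∀ i : Fin k, (p.1, p.2 i) ∈ S})
        = Set.pi Set.univ (fun _ : Fin k => Prod.mk a ⁻¹' S) := by
    intro a
    ext f
    simp [Set.mem_pi]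
  calc (∫⁻ a, μ (Prod.mk a ⁻¹' S) ∂ν) ^ k
      ≤ ∫⁻ a, μ (Prod.mk a ⁻¹' S) ^ k ∂ν :=
        pow_lintegral_le_lintegral_pow ν (measurable_measure_prodMk_left hS) k hk
    _ = ∫⁻ a, (Measure.pi fun _ : Fin k => μ)
          (Prod.mk a ⁻¹' {p : α × (Fin k → β) | ∀ i : Fin k, (p.1, p.2 i) ∈ S}) ∂ν := by
        refine lintegral_congr fun a => ?_
        rw [hslice a, Measure.pi_pi]
        simp
end

section
/- Let H be a real inner product space with its Borel sigma-algebra, let mu be a Borel probability measure on H such that the product measure mu tensor mu assigns measure zero to the diagonal {(x, y) : x = y}, and let c be a point of H. Then (mu tensor mu)({(x, y) : inner product of (x - y) with (y - c) is at least 0}) is at most 1/2. -/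
open MeasureTheory
open scoped RealInnerProductSpace

theorem separation_probability_le_half {H : Type*} [NormedAddCommGroup H]
    [InnerProductSpace ℝ H] [MeasurableSpace H] [BorelSpace H]
    (μ : Measure H) [IsProbabilityMeasure μ]
    (hdiag : (μ.prod μ) {p : H × H | p.1 = p.2} = 0) (c : H) :
    (μ.prod μ) {p : H × H | 0 ≤ ⟪p.1 - p.2, p.2 - c⟫} ≤ 1 / 2 := by
  set U : Set (H × H) := {p : H × H | ‖p.2 - c‖ < ‖p.1 - c‖} with hUdef
  have hm : Measurable fun z : H => ‖z - c‖ :=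
    ((continuous_id.sub continuous_const).norm).measurable
  have hU : MeasurableSet U :=
    measurableSet_lt (hm.comp measurable_snd) (hm.comp measurable_fst)
  -- step 1: A ⊆ U ∪ diag
  have hsub : {p : H × H | 0 ≤ ⟪p.1 - p.2, p.2 - c⟫} ⊆ U ∪ {p : H × H | p.1 = p.2} := by
    rintro ⟨x, y⟩ hp
    simp only [Set.mem_setOf_eq] at hp
    by_cases hxy : x = y
    · exact Or.inr hxy
    · left
      have hexp : ‖x - c‖ ^ 2 = ‖x - y‖ ^ 2 + 2 * ⟪x - y, y - c⟫ + ‖y - c‖ ^ 2 := by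
        have h : x - c = (x - y) + (y - c) := by abel
        rw [h, @norm_add_sq_real]
      have hpos : 0 < ‖x - y‖ ^ 2 :=
        pow_pos (norm_pos_iff.mpr (sub_ne_zero_of_ne hxy)) 2
      have h2 : ‖y - c‖ ^ 2 < ‖x - c‖ ^ 2 := by nlinarith
      exact lt_of_pow_lt_pow_left₀ 2 (norm_nonneg _) h2
  -- step 2: measure ≤ μ⊗μ U
  have hle : (μ.prod μ) {p : H × H | 0 ≤ ⟪p.1 - p.2, p.2 - c⟫} ≤ (μ.prod μ) U := by
    calc (μ.prod μ) {p : H × H | 0 ≤ ⟪p.1 - p.2, p.2 - c⟫}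
        ≤ (μ.prod μ) (U ∪ {p : H × H | p.1 = p.2}) := measure_mono hsub
      _ ≤ (μ.prod μ) U + (μ.prod μ) {p : H × H | p.1 = p.2} := measure_union_le _ _
      _ = (μ.prod μ) U := by rw [hdiag, add_zero]
  refine hle.trans ?_
  -- step 3: μ⊗μ U ≤ 1/2
  set V : Set (H × H) := {p : H × H | ‖p.1 - c‖ < ‖p.2 - c‖} with hVdef
  have hV : MeasurableSet V :=
    measurableSet_lt (hm.comp measurable_fst) (hm.comp measurable_snd)
  have hswap : (μ.prod μ) V = (μ.prod μ) U := by
    have : V = Prod.swap ⁻¹' U := rfl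
    rw [this, ← Measure.map_apply measurable_swap hU, Measure.prod_swap]
  have hdisj : Disjoint U V := by
    rw [Set.disjoint_left]
    rintro ⟨x, y⟩ h1 h2
    simp only [hUdef, hVdef, Set.mem_setOf_eq] at h1 h2
    exact absurd h1 (not_lt.mpr h2.le)
  have hsum : (μ.prod μ) U + (μ.prod μ) V ≤ 1 := by
    rw [← measure_union hdisj hV]
    exact prob_le_one
  rw [hswap] at hsum
  have h2 : 2 * (μ.prod μ) U ≤ 1 := by rw [two_mul]; exact hsum
  rw [ENNReal.le_div_iff_mul_le (Or.inl two_ne_zero) (Or.inl ENNReal.ofNat_ne_top), mul_comm]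
  exact h2
end
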